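/- arXiv:1201.0484 — 4 statements merged into one kernel-verified Lean document; each statement's English description precedes it below -/
import Mathlib

section
/- Let q be a prime power. Every non-empty set without tangents in PG(2,q) has at least q+2 points. -/
/-!
`PG(2,F)`: points are the 1-dimensional subspaces of `F^3` (modelled as the
projectivization of `Fin 3 → F`), lines are the 2-dimensional subspaces.
-/

variable {F : Type*} [Field F]

/-- The points of `PG(2,F)`: 1-dimensional subspaces of `F^3`. -/
abbrev PGPoint (F : Type*) [Field F] := Projectivization F (Fin 3 → F)

/-- A line of `PG(2,F)` is a 2-dimensional subspace of `F^3`. -/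
def IsProjLine (F : Type*) [Field F] (L : Submodule F (Fin 3 → F)) : Prop :=
  Module.finrank F L = 2

/-- The set of projective points lying on the subspace `L`. -/
def pointsOn (L : Submodule F (Fin 3 → F)) : Set (PGPoint F) :=
  {P | P.submodule ≤ L}

/-- `S` is a set without tangents: no line of `PG(2,F)` meets `S` in exactly one point. -/
def NoTangents (S : Set (PGPoint F)) : Prop :=
  ∀ L : Submodule F (Fin 3 → F), IsProjLine F L →
    ¬ (∃! P : PGPoint F, P ∈ S ∩ pointsOn L)

open Module Submodule Projectivization in
/-- every non-empty set without tangents in `PG(2,q)` has at least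
`q + 2` points. -/
theorem stmt_0 [Fintype F] (q : ℕ) (hq : Fintype.card F = q)
    (S : Set (PGPoint F)) (hne : S.Nonempty) (hS : NoTangents S) :
    q + 2 ≤ S.ncard := by
  classical
  obtain ⟨P, hP⟩ := hne
  set p := P.rep with hpdef
  have hp : p ≠ 0 := P.rep_nonzero
  have h3 : finrank F (Fin 3 → F) = 3 := by simp
  -- pick e1 ∉ span {p}
  have hex1 : ∃ e1, e1 ∉ span F ({p} : Set (Fin 3 → F)) := by
    by_contra h
    push_neg at h
    have htop : span F ({p} : Set (Fin 3 → F)) = ⊤ := Submodule.eq_top_iff'.2 h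
    have h1 : finrank F (span F ({p} : Set (Fin 3 → F))) = 1 := finrank_span_singleton hp
    rw [htop, finrank_top, h3] at h1
    omega
  obtain ⟨e1, he1⟩ := hex1
  have hex2 : ∃ e2, e2 ∉ span F ({p, e1} : Set (Fin 3 → F)) := by
    by_contra h
    push_neg at h
    have htop : span F ({p, e1} : Set (Fin 3 → F)) = ⊤ := Submodule.eq_top_iff'.2 h
    have h2 : finrank F (span F ({p, e1} : Set (Fin 3 → F))) ≤ 2 := by
      refine (finrank_span_le_card _).trans ?_
      simp only [Set.toFinset_insert, Set.toFinset_singleton]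
      exact (Finset.card_insert_le _ _).trans (by simp)
    rw [htop, finrank_top, h3] at h2
    omega
  obtain ⟨e2, he2⟩ := hex2
  -- linear independence of e2, e1, p
  have li : LinearIndependent F ![e2, e1, p] := by
    rw [show ![e2, e1, p] = Fin.cons e2 ![e1, p] by ext i; fin_cases i <;> rfl]
    rw [linearIndependent_fin_cons]
    constructor
    · rw [show ![e1, p] = Fin.cons e1 ![p] by ext i; fin_cases i <;> rfl]
      rw [linearIndependent_fin_cons]
      refine ⟨linearIndependent_unique_iff.2 (by simpa using hp), ?_⟩
      simpa using he1
    · have : Set.range ![e1, p] = {p, e1} := by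
        ext x; simp [Fin.exists_fin_two, or_comm]
      rw [this]; exact he2
  have key : ∀ a b c : F, a • e2 + b • e1 + c • p = 0 → a = 0 ∧ b = 0 ∧ c = 0 := by
    intro a b c habc
    have := Fintype.linearIndependent_iff.1 li ![a, b, c] ?_
    · exact ⟨this 0, this 1, this 2⟩
    · simpa [Fin.sum_univ_three, add_assoc] using habc
  -- the pencil of lines through P
  set v : Option F → (Fin 3 → F) := fun i => Option.elim i e2 (fun a => e1 + a • e2) with hv
  set L : Option F → Submodule F (Fin 3 → F) := fun i => span F ({p, v i} : Set (Fin 3 → F)) with hL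
  have livi : ∀ i, LinearIndependent F ![p, v i] := by
    intro i
    rw [LinearIndependent.pair_iff]
    intro s t hst
    cases i with
    | none =>
      have h0 : t • e2 + (0:F) • e1 + s • p = 0 := by
        simp only [v, Option.elim] at hst; rw [← hst]; module
      obtain ⟨h1, _, h3⟩ := key _ _ _ h0
      exact ⟨h3, h1⟩
    | some a =>
      have h0 : (t * a) • e2 + t • e1 + s • p = 0 := by
        simp only [v, Option.elim] at hst; rw [← hst]; module
      obtain ⟨_, h2, h3⟩ := key _ _ _ h0
      exact ⟨h3, h2⟩
  have hline : ∀ i, IsProjLine F (L i) := by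
    intro i
    have hr : Set.range ![p, v i] = {p, v i} := by
      ext x; simp [Fin.exists_fin_two]; tauto
    have := finrank_span_eq_card (livi i)
    rw [hr] at this
    simpa [IsProjLine, L] using this
  have hPmem : ∀ i, P ∈ pointsOn (L i) := by
    intro i
    simp only [pointsOn, Set.mem_setOf_eq, Projectivization.submodule_eq, ← hpdef]
    exact span_mono (by simp)
  -- each line contains a second point of S
  have hsec : ∀ i, ∃ Q, Q ∈ S ∧ Q ∈ pointsOn (L i) ∧ Q ≠ P := by
    intro i
    by_contra h
    push_neg at h
    exact hS (L i) (hline i) ⟨P, ⟨hP, hPmem i⟩, fun Q hQ => h Q hQ.1 hQ.2⟩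
  choose f hfS hfL hfP using hsec
  -- injectivity
  have hinj : Function.Injective f := by
    intro i j hij
    by_contra hne
    set Q := f i with hQ
    have hmem : ∀ k, Q ∈ pointsOn (L k) → Q.rep ∈ L k := by
      intro k hk
      simp only [pointsOn, Set.mem_setOf_eq, Projectivization.submodule_eq] at hk
      exact hk (mem_span_singleton_self _)
    have hiL : Q.rep ∈ L i := hmem i (hfL i)
    have hjL : Q.rep ∈ L j := hmem j (hij ▸ hfL j)
    rw [hL, mem_span_pair] at hiL hjL
    obtain ⟨c, d, hcd⟩ := hiL
    obtain ⟨c', d', hcd'⟩ := hjL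
    -- show d = 0
    have hd : d = 0 := by
      have heq : c • p + d • v i - (c' • p + d' • v j) = 0 := by
        rw [hcd, hcd']; simp
      match i, j, hne with
      | some a, some b, hne =>
        have hab : a ≠ b := fun h => hne (by rw [h])
        have h0 : (d * a - d' * b) • e2 + (d - d') • e1 + (c - c') • p = 0 := by
          simp only [v, Option.elim] at heq
          rw [← heq]; module
        obtain ⟨h1, h2, h3⟩ := key _ _ _ h0
        have hdd : d = d' := sub_eq_zero.1 h2
        have hdab : d * (a - b) = 0 := by
          rw [← hdd] at h1; linear_combination h1
        rcases mul_eq_zero.1 hdab with h | h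
        · exact h
        · exact absurd (sub_eq_zero.1 h) hab
      | some a, none, _ =>
        have h0 : (d * a - d') • e2 + d • e1 + (c - c') • p = 0 := by
          simp only [v, Option.elim] at heq
          rw [← heq]; module
        exact (key _ _ _ h0).2.1
      | none, some b, _ =>
        have h0 : (d - d' * b) • e2 + (-d') • e1 + (c - c') • p = 0 := by
          simp only [v, Option.elim] at heq
          rw [← heq]; module
        obtain ⟨h1, h2, _⟩ := key _ _ _ h0
        have hd'0 : d' = 0 := neg_eq_zero.1 h2
        have := sub_eq_zero.1 h1
        rw [hd'0] at this; simpa using this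
      | none, none, hne => exact absurd rfl hne
    -- hence Q = P, contradiction
    have hQrep : Q.rep ∈ span F ({p} : Set (Fin 3 → F)) := by
      rw [hcd.symm, hd]
      simp [Submodule.mem_span_singleton]
    have hle : Q.submodule ≤ P.submodule := by
      rw [Projectivization.submodule_eq, Projectivization.submodule_eq, ← hpdef]
      exact span_le.2 (by simpa using hQrep)
    have : Q.submodule = P.submodule := by
      apply Submodule.eq_of_le_of_finrank_eq hle
      rw [Q.finrank_submodule, P.finrank_submodule]
    exact hfP i (Projectivization.submodule_injective this)
  -- counting
  have : Finite (PGPoint F) := Quotient.finite _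
  have hfin : S.Finite := Set.toFinite S
  have hsub : insert P (Set.range f) ⊆ S := by
    rintro x (rfl | ⟨i, rfl⟩)
    · exact hP
    · exact hfS i
  have hPnot : P ∉ Set.range f := by
    rintro ⟨i, hi⟩; exact hfP i hi
  have hcard : (insert P (Set.range f)).ncard = q + 2 := by
    rw [Set.ncard_insert_of_notMem hPnot (Set.toFinite _), ← Nat.card_coe_set_eq,
      Nat.card_range_of_injective hinj, Nat.card_eq_fintype_card, Fintype.card_option, hq]
  calc q + 2 = (insert P (Set.range f)).ncard := hcard.symm
    _ ≤ S.ncard := Set.ncard_le_ncard hsub hfin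
end

section
/- Let p be a prime and let S be a set without tangents in PG(2,p) with |S| ≤ 2p. If some line L of PG(2,p) contains exactly p points of S, then S is the trivial set without tangents, i.e. there exist two distinct lines L1, L2 such that S is the set of all points on L1 or L2 different from L1 ∩ L2. -/
/-!
`PG(2,F)`: points are the 1-dimensional subspaces of `F^3` (modelled as the
projectivization of `Fin 3 → F`), lines are the 2-dimensional subspaces.
-/

variable {F : Type*} [Field F]

/-- The trivial set without tangents: all points on one of two distinct lines,
different from their intersection point. -/
def IsTrivialSWT (S : Set (PGPoint F)) : Prop :=
  ∃ L1 L2 : Submodule F (Fin 3 → F), IsProjLine F L1 ∧ IsProjLine F L2 ∧ L1 ≠ L2 ∧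
    S = (pointsOn L1 ∪ pointsOn L2) \ (pointsOn L1 ∩ pointsOn L2)

open Module Submodule Projectivization

instance [Fintype F] : Finite (PGPoint F) := Quotient.finite _

lemma mem_pointsOn {P : PGPoint F} {L : Submodule F (Fin 3 → F)} :
    P ∈ pointsOn L ↔ P.rep ∈ L := by
  rw [pointsOn, Set.mem_setOf_eq, Projectivization.submodule_eq, span_singleton_le_iff_mem]

lemma mk_mem_pointsOn {v : Fin 3 → F} {hv : v ≠ 0} {L : Submodule F (Fin 3 → F)} :
    Projectivization.mk F v hv ∈ pointsOn L ↔ v ∈ L := by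
  rw [pointsOn, Set.mem_setOf_eq, Projectivization.submodule_mk, span_singleton_le_iff_mem]

def lineTh (P Q : PGPoint F) : Submodule F (Fin 3 → F) := P.submodule ⊔ Q.submodule

lemma submodule_inf_eq_bot {P Q : PGPoint F} (h : P ≠ Q) :
    P.submodule ⊓ Q.submodule = ⊥ := by
  by_contra hne
  have h1 : Module.finrank F (P.submodule ⊓ Q.submodule : Submodule F (Fin 3 → F)) ≤ 1 := by
    have := Submodule.finrank_mono (inf_le_left (a := P.submodule) (b := Q.submodule))
    rwa [P.finrank_submodule] at this
  have h2 : 0 < Module.finrank F (P.submodule ⊓ Q.submodule : Submodule F (Fin 3 → F)) := by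
    rcases Nat.eq_zero_or_pos (Module.finrank F
      (P.submodule ⊓ Q.submodule : Submodule F (Fin 3 → F))) with h0 | h0
    · exact absurd (Submodule.finrank_eq_zero.mp h0) hne
    · exact h0
  have heq1 : P.submodule ⊓ Q.submodule = P.submodule :=
    Submodule.eq_of_le_of_finrank_eq inf_le_left (by rw [P.finrank_submodule]; omega)
  have heq2 : P.submodule ⊓ Q.submodule = Q.submodule :=
    Submodule.eq_of_le_of_finrank_eq inf_le_right (by rw [Q.finrank_submodule]; omega)
  exact h (Projectivization.submodule_injective (heq1 ▸ heq2))

lemma isProjLine_lineTh {P Q : PGPoint F} (h : P ≠ Q) : IsProjLine F (lineTh P Q) := by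
  have key := Submodule.finrank_sup_add_finrank_inf_eq P.submodule Q.submodule
  rw [submodule_inf_eq_bot h, P.finrank_submodule, Q.finrank_submodule] at key
  simp only [finrank_bot] at key
  unfold IsProjLine lineTh
  omega

lemma left_mem_lineTh (P Q : PGPoint F) : P ∈ pointsOn (lineTh P Q) :=
  show P.submodule ≤ _ from le_sup_left

lemma right_mem_lineTh (P Q : PGPoint F) : Q ∈ pointsOn (lineTh P Q) :=
  show Q.submodule ≤ _ from le_sup_right

lemma line_unique {L : Submodule F (Fin 3 → F)} (hL : IsProjLine F L) {P Q : PGPoint F}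
    (hPQ : P ≠ Q) (hP : P ∈ pointsOn L) (hQ : Q ∈ pointsOn L) : L = lineTh P Q :=
  (Submodule.eq_of_le_of_finrank_eq (sup_le hP hQ)
    ((isProjLine_lineTh hPQ).trans hL.symm)).symm

lemma eq_of_two_points {L L' : Submodule F (Fin 3 → F)} (hL : IsProjLine F L)
    (hL' : IsProjLine F L') {P Q : PGPoint F} (hPQ : P ≠ Q)
    (hP : P ∈ pointsOn L) (hQ : Q ∈ pointsOn L) (hP' : P ∈ pointsOn L')
    (hQ' : Q ∈ pointsOn L') : L = L' := by
  rw [line_unique hL hPQ hP hQ, line_unique hL' hPQ hP' hQ']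

lemma lines_intersect {L1 L2 : Submodule F (Fin 3 → F)} (h1 : IsProjLine F L1)
    (h2 : IsProjLine F L2) : ∃ P : PGPoint F, P ∈ pointsOn L1 ∧ P ∈ pointsOn L2 := by
  have key := Submodule.finrank_sup_add_finrank_inf_eq L1 L2
  rw [h1, h2] at key
  have hsup : Module.finrank F (L1 ⊔ L2 : Submodule F (Fin 3 → F)) ≤ 3 := by
    have := Submodule.finrank_le (L1 ⊔ L2)
    rwa [Module.finrank_fin_fun] at this
  have hpos : 0 < Module.finrank F (L1 ⊓ L2 : Submodule F (Fin 3 → F)) := by omega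
  have hne : (L1 ⊓ L2 : Submodule F (Fin 3 → F)) ≠ ⊥ := by
    intro hbot
    rw [hbot] at hpos
    simp at hpos
  obtain ⟨v, hv, hv0⟩ := Submodule.exists_mem_ne_zero_of_ne_bot hne
  exact ⟨Projectivization.mk F v hv0, mk_mem_pointsOn.mpr hv.1, mk_mem_pointsOn.mpr hv.2⟩

lemma inter_point_unique {L1 L2 : Submodule F (Fin 3 → F)} (h1 : IsProjLine F L1)
    (h2 : IsProjLine F L2) (hne : L1 ≠ L2) {P Q : PGPoint F}
    (hP1 : P ∈ pointsOn L1) (hP2 : P ∈ pointsOn L2)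
    (hQ1 : Q ∈ pointsOn L1) (hQ2 : Q ∈ pointsOn L2) : P = Q := by
  by_contra hPQ
  exact hne (eq_of_two_points h1 h2 hPQ hP1 hQ1 hP2 hQ2)

lemma ncard_pointsOn [Fintype F] {L : Submodule F (Fin 3 → F)} (hL : IsProjLine F L) :
    (pointsOn L).ncard = Fintype.card F + 1 := by
  classical
  obtain ⟨b⟩ : Nonempty (Basis (Fin 2) F L) := ⟨Module.finBasisOfFinrankEq F L hL⟩
  set u : Fin 3 → F := ((b 0 : L) : Fin 3 → F) with hu_def
  set v : Fin 3 → F := ((b 1 : L) : Fin 3 → F) with hv_def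
  have huL : u ∈ L := (b 0).2
  have hvL : v ∈ L := (b 1).2
  have hli : ∀ s t : F, s • u + t • v = 0 → s = 0 ∧ t = 0 := by
    intro s t hst
    have hsum : (∑ i, (![s, t] : Fin 2 → F) i • b i) = 0 := by
      apply Subtype.coe_injective
      rw [Fin.sum_univ_two]
      simp only [Matrix.cons_val_zero, Matrix.cons_val_one, Matrix.head_cons,
        Submodule.coe_add, SetLike.val_smul, ZeroMemClass.coe_zero]
      exact hst
    have := Fintype.linearIndependent_iff.mp b.linearIndependent ![s, t] hsum
    exact ⟨this 0, this 1⟩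
  have hvne : v ≠ 0 := by
    intro h0
    have := (hli 0 1 (by rw [h0]; simp)).2
    exact one_ne_zero this
  have hne : ∀ t : F, u + t • v ≠ 0 := by
    intro t h0
    have := (hli 1 t (by rw [← h0]; simp)).1
    exact one_ne_zero this
  let f : Option F → ↥(pointsOn L) := fun o =>
    match o with
    | none => ⟨Projectivization.mk F v hvne, mk_mem_pointsOn.mpr hvL⟩
    | some t => ⟨Projectivization.mk F (u + t • v) (hne t),
        mk_mem_pointsOn.mpr (add_mem huL (smul_mem _ _ hvL))⟩
  have hbij : Function.Bijective f := by
    constructor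
    · intro o1 o2 h
      match o1, o2 with
      | none, none => rfl
      | some t1, some t2 =>
        have h' := Subtype.ext_iff.mp h
        simp only [f] at h'
        rw [Projectivization.mk_eq_mk_iff] at h'
        obtain ⟨a, ha⟩ := h'
        have hkey : ((a : F) - 1) • u + ((a : F) * t2 - t1) • v = 0 := by
          have h2 : (a : F) • (u + t2 • v) = u + t1 • v := ha
          linear_combination (norm := module) h2
        obtain ⟨h1, h2⟩ := hli _ _ hkey
        have ha1 : (a : F) = 1 := by rwa [sub_eq_zero] at h1
        rw [ha1, one_mul, sub_eq_zero] at h2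
        rw [h2]
      | some t1, none =>
        have h' := Subtype.ext_iff.mp h
        simp only [f] at h'
        rw [Projectivization.mk_eq_mk_iff] at h'
        obtain ⟨a, ha⟩ := h'
        have hkey : (1 : F) • u + (t1 - (a : F)) • v = 0 := by
          have h2 : (a : F) • v = u + t1 • v := ha
          linear_combination (norm := module) -h2
        exact absurd (hli _ _ hkey).1 one_ne_zero
      | none, some t2 =>
        have h' := Subtype.ext_iff.mp h
        simp only [f] at h'
        rw [Projectivization.mk_eq_mk_iff] at h'
        obtain ⟨a, ha⟩ := h'
        have hkey : ((a : F)) • u + ((a : F) * t2 - 1) • v = 0 := by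
          have h2 : (a : F) • (u + t2 • v) = v := ha
          linear_combination (norm := module) h2
        exact absurd (hli _ _ hkey).1 a.ne_zero
    · rintro ⟨P, hP⟩
      have hw : P.rep ∈ L := mem_pointsOn.mp hP
      have hx : (⟨P.rep, hw⟩ : L) = b.repr ⟨P.rep, hw⟩ 0 • b 0 + b.repr ⟨P.rep, hw⟩ 1 • b 1 := by
        have := b.sum_repr ⟨P.rep, hw⟩
        rw [Fin.sum_univ_two] at this
        exact this.symm
      set s := b.repr ⟨P.rep, hw⟩ 0
      set t := b.repr ⟨P.rep, hw⟩ 1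
      have hw2 : P.rep = s • u + t • v := by
        have h3 := Subtype.ext_iff.mp hx
        simpa only [Submodule.coe_add, SetLike.val_smul] using h3
      by_cases hs : s = 0
      · refine ⟨none, Subtype.ext ?_⟩
        have ht : t ≠ 0 := by
          intro ht0
          exact P.rep_nonzero (by rw [hw2, hs, ht0]; simp)
        show Projectivization.mk F v hvne = P
        conv_rhs => rw [← P.mk_rep]
        rw [Projectivization.mk_eq_mk_iff]
        refine ⟨(Units.mk0 t ht)⁻¹, ?_⟩
        show (t⁻¹ : F) • P.rep = v
        rw [hw2, hs, zero_smul, zero_add, smul_smul, inv_mul_cancel₀ ht, one_smul]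
      · refine ⟨some (s⁻¹ * t), Subtype.ext ?_⟩
        show Projectivization.mk F (u + (s⁻¹ * t) • v) _ = P
        conv_rhs => rw [← P.mk_rep]
        rw [Projectivization.mk_eq_mk_iff]
        refine ⟨(Units.mk0 s hs)⁻¹, ?_⟩
        show (s⁻¹ : F) • P.rep = u + (s⁻¹ * t) • v
        rw [hw2, smul_add, smul_smul, smul_smul, inv_mul_cancel₀ hs, one_smul]
  have h1 : (pointsOn L).ncard = Nat.card (Option F) :=
    ((Nat.card_coe_set_eq _).symm).trans (Nat.card_eq_of_bijective f hbij).symm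
  rw [h1, Nat.card_eq_fintype_card, Fintype.card_option]

lemma exists_second_point {S : Set (PGPoint F)} (hS : NoTangents S)
    {M : Submodule F (Fin 3 → F)} (hM : IsProjLine F M) {P : PGPoint F}
    (hP : P ∈ S ∩ pointsOn M) : ∃ Q, Q ∈ S ∩ pointsOn M ∧ Q ≠ P := by
  by_contra h
  push_neg at h
  exact hS M hM ⟨P, hP, fun y hy => h y hy⟩

lemma exists_line_avoiding (X : PGPoint F) :
    ∃ L0 : Submodule F (Fin 3 → F), IsProjLine F L0 ∧ X ∉ pointsOn L0 := by
  obtain ⟨W, hW⟩ := Submodule.exists_isCompl X.submodule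
  refine ⟨W, ?_, ?_⟩
  · have h1 := Submodule.finrank_add_eq_of_isCompl hW
    rw [X.finrank_submodule, Module.finrank_fin_fun] at h1
    show Module.finrank F W = 2
    omega
  · intro hX
    have hbot : X.submodule = ⊥ := by
      have h2 : X.submodule ≤ X.submodule ⊓ W := le_inf le_rfl hX
      rw [hW.inf_eq_bot] at h2
      exact le_bot_iff.mp h2
    have := X.finrank_submodule
    rw [hbot] at this
    simp at this

lemma key_lemma [Fintype F] {S : Set (PGPoint F)} (hS : NoTangents S)
    {L : Submodule F (Fin 3 → F)} (hL : IsProjLine F L)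
    (hle : (S \ pointsOn L).ncard ≤ Fintype.card F)
    {X : PGPoint F} (hX1 : X ∈ S) (hX2 : X ∈ pointsOn L) :
    (S \ pointsOn L).ncard = Fintype.card F ∧
      ∀ Z ∈ S \ pointsOn L, ∀ Z' ∈ S \ pointsOn L,
        Z' ∈ pointsOn (lineTh X Z) → Z' = Z := by
  classical
  obtain ⟨L0, hL0, hXL0⟩ := exists_line_avoiding X
  have hLL0 : L ≠ L0 := fun h => hXL0 (h ▸ hX2)
  obtain ⟨P0, hP0L, hP0L0⟩ := lines_intersect hL hL0
  have hXP0 : X ≠ P0 := fun h => hXL0 (h ▸ hP0L0)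
  set A : Set (PGPoint F) := pointsOn L0 \ {P0} with hA_def
  have hAcard : A.ncard = Fintype.card F := by
    rw [hA_def, Set.ncard_diff_singleton_of_mem hP0L0,
      ncard_pointsOn hL0]
    omega
  -- every point of A has an S-point off L on the line joining it to X
  have hex : ∀ Y ∈ A, ∃ Z, (Z ∈ S \ pointsOn L) ∧ Z ∈ pointsOn (lineTh X Y) := by
    rintro Y ⟨hY0, hYP0⟩
    rw [Set.mem_singleton_iff] at hYP0
    have hXY : X ≠ Y := fun h => hXL0 (h ▸ hY0)
    have hYL : Y ∉ pointsOn L := fun hmem =>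
      hLL0 (eq_of_two_points hL hL0 hYP0 hmem hP0L hY0 hP0L0)
    have hM : IsProjLine F (lineTh X Y) := isProjLine_lineTh hXY
    obtain ⟨Z, hZ, hZX⟩ := exists_second_point hS hM ⟨hX1, left_mem_lineTh X Y⟩
    have hZL : Z ∉ pointsOn L := by
      intro hZLmem
      have : L = lineTh X Y := eq_of_two_points hL hM hZX hZLmem hX2 hZ.2 (left_mem_lineTh X Y)
      exact hYL (this ▸ right_mem_lineTh X Y)
    exact ⟨Z, ⟨hZ.1, hZL⟩, hZ.2⟩
  choose! f hf1 hf2 using hex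
  have hfne : ∀ Y ∈ A, f Y ≠ X := by
    intro Y hY h
    exact (hf1 Y hY).2 (h ▸ hX2)
  have hlineL0 : ∀ Y : PGPoint F, X ∉ pointsOn L0 → lineTh X Y ≠ L0 :=
    fun Y h hcontra => h (hcontra ▸ left_mem_lineTh X Y)
  have hinj : Set.InjOn f A := by
    rintro Y1 hY1 Y2 hY2 heq
    have hXY1 : X ≠ Y1 := fun h => hXL0 (h ▸ hY1.1)
    have hXY2 : X ≠ Y2 := fun h => hXL0 (h ▸ hY2.1)
    have hZ1 : f Y1 ∈ pointsOn (lineTh X Y1) := hf2 Y1 hY1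
    have hZ2 : f Y1 ∈ pointsOn (lineTh X Y2) := heq ▸ hf2 Y2 hY2
    have hlines : lineTh X Y1 = lineTh X Y2 :=
      eq_of_two_points (isProjLine_lineTh hXY1) (isProjLine_lineTh hXY2)
        (hfne Y1 hY1) hZ1 (left_mem_lineTh X Y1) hZ2 (left_mem_lineTh X Y2)
    exact inter_point_unique (isProjLine_lineTh hXY1) hL0 (hlineL0 Y1 hXL0)
      (right_mem_lineTh X Y1) hY1.1 (hlines ▸ right_mem_lineTh X Y2) hY2.1
  have hge : Fintype.card F ≤ (S \ pointsOn L).ncard := by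
    rw [← hAcard]
    exact Set.ncard_le_ncard_of_injOn f (fun Y hY => hf1 Y hY) hinj (Set.toFinite _)
  have hcard_eq : (S \ pointsOn L).ncard = Fintype.card F := le_antisymm hle hge
  refine ⟨hcard_eq, ?_⟩
  -- the projection to L0 along lines through X
  have hexπ : ∀ Z ∈ S \ pointsOn L, ∃ Y, Y ∈ pointsOn (lineTh X Z) ∧ Y ∈ pointsOn L0 := by
    intro Z hZ
    have hXZ : X ≠ Z := fun h => hZ.2 (h ▸ hX2)
    exact lines_intersect (isProjLine_lineTh hXZ) hL0
  choose! π hπ1 hπ2 using hexπ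
  have hπA : ∀ Z ∈ S \ pointsOn L, π Z ∈ A := by
    intro Z hZ
    have hXZ : X ≠ Z := fun h => hZ.2 (h ▸ hX2)
    refine ⟨hπ2 Z hZ, ?_⟩
    rw [Set.mem_singleton_iff]
    intro hP0eq
    have hP0M : P0 ∈ pointsOn (lineTh X Z) := hP0eq ▸ hπ1 Z hZ
    have : L = lineTh X Z :=
      eq_of_two_points hL (isProjLine_lineTh hXZ) hXP0 hX2 hP0L (left_mem_lineTh X Z) hP0M
    exact hZ.2 (this ▸ right_mem_lineTh X Z)
  have hsurj : ∀ Y ∈ A, ∃ Z, ∃ hZ : Z ∈ S \ pointsOn L, π Z = Y := by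
    intro Y hY
    have hXY : X ≠ Y := fun h => hXL0 (h ▸ hY.1)
    have hZmem := hf1 Y hY
    have hZline := hf2 Y hY
    have hfYX : f Y ≠ X := hfne Y hY
    have hlines : lineTh X Y = lineTh X (f Y) :=
      line_unique (isProjLine_lineTh hXY) (Ne.symm hfYX) (left_mem_lineTh X Y) hZline
    refine ⟨f Y, hZmem, ?_⟩
    exact inter_point_unique (isProjLine_lineTh hXY) hL0 (hlineL0 Y hXL0)
      (hlines ▸ hπ1 (f Y) hZmem) (hπ2 (f Y) hZmem) (right_mem_lineTh X Y) hY.1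
  -- injectivity of π on S \ L from card equality
  have hπinj : ∀ Z1 ∈ S \ pointsOn L, ∀ Z2 ∈ S \ pointsOn L, π Z1 = π Z2 → Z1 = Z2 := by
    intro Z1 hZ1 Z2 hZ2 heq
    exact Set.inj_on_of_surj_on_of_ncard_le (fun Z _ => π Z) (fun Z hZ => hπA Z hZ)
      (fun Y hY => by obtain ⟨Z, hZ, hZY⟩ := hsurj Y hY; exact ⟨Z, hZ, hZY⟩)
      (by rw [hcard_eq, hAcard]) hZ1 hZ2 heq (Set.toFinite _)
  intro Z hZ Z' hZ' hZ'line
  have hXZ : X ≠ Z := fun h => hZ.2 (h ▸ hX2)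
  have hXZ' : X ≠ Z' := fun h => hZ'.2 (h ▸ hX2)
  have hlines : lineTh X Z = lineTh X Z' :=
    line_unique (isProjLine_lineTh hXZ) hXZ' (left_mem_lineTh X Z) hZ'line
  have hπeq : π Z' = π Z :=
    inter_point_unique (isProjLine_lineTh hXZ) hL0 (hlineL0 Z hXL0)
      (hlines ▸ hπ1 Z' hZ') (hπ2 Z' hZ') (hπ1 Z hZ) (hπ2 Z hZ)
  exact hπinj Z' hZ' Z hZ hπeq


/-- a set without tangents of size at most `2p` in `PG(2,p)` having
a line with exactly `p` of its points is trivial. -/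
theorem stmt_5 [Fintype F] (p : ℕ) (hp : p.Prime) (hcard : Fintype.card F = p)
    (S : Set (PGPoint F)) (hS : NoTangents S) (hsize : S.ncard ≤ 2 * p)
    (L : Submodule F (Fin 3 → F)) (hL : IsProjLine F L)
    (hLS : (S ∩ pointsOn L).ncard = p) :
    IsTrivialSWT S := by
  classical
  have hp2 : 2 ≤ p := hp.two_le
  have hLcard : (pointsOn L).ncard = p + 1 := by rw [ncard_pointsOn hL, hcard]
  -- the unique point Q of L not in S
  have hTcard : ((pointsOn L) \ S).ncard = 1 := by
    have hrw : pointsOn L \ S = pointsOn L \ (S ∩ pointsOn L) := by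
      ext R
      simp only [Set.mem_diff, Set.mem_inter_iff]
      tauto
    rw [hrw, Set.ncard_diff Set.inter_subset_right (Set.toFinite _), hLcard, hLS]
    omega
  obtain ⟨Q, hQ⟩ := Set.ncard_eq_one.mp hTcard
  have hQmem : Q ∈ pointsOn L \ S := by rw [hQ]; rfl
  have hQL : Q ∈ pointsOn L := hQmem.1
  have hQS : Q ∉ S := hQmem.2
  have hmiss : ∀ R ∈ pointsOn L, R ∉ S → R = Q := by
    intro R hR hRS
    have : R ∈ pointsOn L \ S := ⟨hR, hRS⟩
    rwa [hQ, Set.mem_singleton_iff] at this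
  -- |S \ L| ≤ p
  have hsplit : (S ∩ pointsOn L).ncard + (S \ pointsOn L).ncard = S.ncard :=
    Set.ncard_inter_add_ncard_diff_eq_ncard S (pointsOn L) (Set.toFinite _)
  have hle : (S \ pointsOn L).ncard ≤ p := by omega
  -- a point of S on L
  have hpos : (S ∩ pointsOn L).ncard ≠ 0 := by omega
  obtain ⟨X0, hX0⟩ := Set.nonempty_of_ncard_ne_zero hpos
  have hkey0 := key_lemma hS hL (by rw [hcard]; exact hle) hX0.1 hX0.2
  have hcardSL : (S \ pointsOn L).ncard = p := by rw [hkey0.1, hcard]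
  have KEY : ∀ X ∈ S, X ∈ pointsOn L → ∀ Z ∈ S \ pointsOn L, ∀ Z' ∈ S \ pointsOn L,
      Z' ∈ pointsOn (lineTh X Z) → Z' = Z := by
    intro X hXS hXL
    exact (key_lemma hS hL (by rw [hcard]; exact hle) hXS hXL).2
  -- two distinct points of S \ L
  have h2pts : 1 < (S \ pointsOn L).ncard := by omega
  obtain ⟨Y0, hY0, Z0, hZ0, hYZ⟩ := (Set.one_lt_ncard (Set.toFinite _)).mp h2pts
  set M : Submodule F (Fin 3 → F) := lineTh Y0 Z0 with hM_def
  have hM : IsProjLine F M := isProjLine_lineTh hYZ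
  -- every line joining Y0 to another point of S \ L passes through Q
  have hQline : ∀ W ∈ S \ pointsOn L, W ≠ Y0 → Q ∈ pointsOn (lineTh Y0 W) := by
    intro W hW hWY
    have hN : IsProjLine F (lineTh Y0 W) := isProjLine_lineTh (Ne.symm hWY)
    obtain ⟨R, hRN, hRL⟩ := lines_intersect hN hL
    have hRnotS : R ∉ S := by
      intro hRS
      have hRY0 : R ≠ Y0 := fun h => hY0.2 (h ▸ hRL)
      have hNR : lineTh Y0 W = lineTh R Y0 :=
        line_unique hN hRY0 hRN (left_mem_lineTh Y0 W)
      have := KEY R hRS hRL Y0 hY0 W hW (hNR ▸ right_mem_lineTh Y0 W)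
      exact hWY this
    have : R = Q := hmiss R hRL hRnotS
    exact this ▸ hRN
  have hQM : Q ∈ pointsOn M := hQline Z0 hZ0 (Ne.symm hYZ)
  have hQY0 : Q ≠ Y0 := fun h => hY0.2 (h ▸ hQL)
  -- S \ L is contained in M
  have hsub : S \ pointsOn L ⊆ pointsOn M := by
    intro W hW
    by_cases hWY : W = Y0
    · rw [hWY]; exact left_mem_lineTh _ _
    · have hQN : Q ∈ pointsOn (lineTh Y0 W) := hQline W hW hWY
      have heq : lineTh Y0 W = M :=
        eq_of_two_points (isProjLine_lineTh (Ne.symm hWY)) hM hQY0 hQN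
          (left_mem_lineTh Y0 W) hQM (left_mem_lineTh Y0 Z0)
      exact heq ▸ right_mem_lineTh Y0 W
  have hML : M ≠ L := fun h => hY0.2 (h ▸ left_mem_lineTh Y0 Z0)
  -- identification of the two halves of S
  have h1 : S ∩ pointsOn L = pointsOn L \ {Q} := by
    apply Set.eq_of_subset_of_ncard_le
    · rintro R ⟨hRS, hRL⟩
      exact ⟨hRL, fun h => hQS ((Set.mem_singleton_iff.mp h) ▸ hRS)⟩
    · rw [Set.ncard_diff_singleton_of_mem hQL, hLcard, hLS]
      omega
    · exact Set.toFinite _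
  have h2 : S \ pointsOn L = pointsOn M \ {Q} := by
    apply Set.eq_of_subset_of_ncard_le
    · intro W hW
      exact ⟨hsub hW, fun h => hQS ((Set.mem_singleton_iff.mp h) ▸ hW.1)⟩
    · rw [Set.ncard_diff_singleton_of_mem hQM, ncard_pointsOn hM,
        hcard, hcardSL]
      omega
    · exact Set.toFinite _
  have h3 : pointsOn L ∩ pointsOn M = {Q} := by
    ext R
    constructor
    · rintro ⟨hRL, hRM⟩
      exact Set.mem_singleton_iff.mpr
        (inter_point_unique hL hM (Ne.symm hML) hRL hRM hQL hQM)
    · intro h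
      rw [Set.mem_singleton_iff] at h
      exact h ▸ ⟨hQL, hQM⟩
  refine ⟨L, M, hL, hM, Ne.symm hML, ?_⟩
  rw [h3]
  have hS_eq : S = (S ∩ pointsOn L) ∪ (S \ pointsOn L) := (Set.inter_union_diff S _).symm
  rw [hS_eq, h1, h2, ← Set.union_diff_distrib]
end

section
/- Every set without tangents of size 6 in PG(2,3) is the trivial set without tangents, i.e. there exist two distinct lines L1, L2 of PG(2,3) such that the set equals the set of all points on L1 or L2 different from L1 ∩ L2. -/
/-!
`PG(2,F)`: points are the 1-dimensional subspaces of `F^3` (modelled as the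
projectivization of `Fin 3 → F`), lines are the 2-dimensional subspaces.
-/

variable {F : Type*} [Field F]

/-! ### Auxiliary finite model of `PG(2,3)` over `ZMod 3` -/

namespace SWTAux

/-- Representative vectors for the 13 points of `PG(2,3)`. -/
def vecs : Fin 13 → (Fin 3 → ZMod 3) :=
  ![![0,0,1], ![0,1,0], ![0,1,1], ![0,1,2], ![1,0,0], ![1,0,1], ![1,0,2],
    ![1,1,0], ![1,1,1], ![1,1,2], ![1,2,0], ![1,2,1], ![1,2,2]]

/-- `k` lies on the line spanned by points `i` and `j`. -/
def colB (i j k : Fin 13) : Prop := ∃ a b : ZMod 3, a • vecs i + b • vecs j = vecs k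

instance (i j k : Fin 13) : Decidable (colB i j k) := by unfold colB; infer_instance

/-- The 13 lines of `PG(2,3)` as sets of point indices. -/
def lineF : Fin 13 → Finset (Fin 13) :=
  ![{1,4,7,10}, {0,4,5,6}, {3,4,9,11}, {2,4,8,12}, {0,1,2,3}, {1,6,9,12}, {1,5,8,11},
    {0,10,11,12}, {3,6,8,10}, {2,5,9,10}, {0,7,8,9}, {2,6,7,11}, {3,5,7,12}]

set_option maxRecDepth 1000000
set_option maxHeartbeats 8000000

theorem D1 : ∀ i : Fin 13, vecs i ≠ 0 := by decide

theorem D2 : ∀ i j : Fin 13, (∃ c : ZMod 3, c ≠ 0 ∧ c • vecs i = vecs j) → i = j := by decide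

theorem D3 : ∀ v : Fin 3 → ZMod 3, v ≠ 0 →
    ∃ i : Fin 13, ∃ c : ZMod 3, c ≠ 0 ∧ c • vecs i = v := by decide

theorem D4 : ∀ i j : Fin 13, i ≠ j →
    ∀ a b : ZMod 3, a • vecs i + b • vecs j = 0 → a = 0 ∧ b = 0 := by decide

theorem D5 : ∀ l : Fin 13, ∃ i j : Fin 13, i ≠ j ∧ ∀ k, (k ∈ lineF l ↔ colB i j k) := by decide

theorem D8 : ∀ l m : Fin 13, l ≠ m → lineF l ≠ lineF m := by decide

/-- The main finite computation: the tangent-free 6-subsets are exactly the symmetric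
differences of pairs of distinct lines. -/
theorem bigDecide : (Finset.univ.powersetCard 6 (α := Fin 13)).filter
      (fun T => ∀ l : Fin 13, (T ∩ lineF l).card ≠ 1)
    = (Finset.univ.filter (fun p : Fin 13 × Fin 13 => p.1 < p.2)).image
      (fun p => (lineF p.1 ∪ lineF p.2) \ (lineF p.1 ∩ lineF p.2)) := by decide

theorem cardOne_iff (T L : Finset (Fin 13)) :
    (T ∩ L).card = 1 ↔ ∃! k, k ∈ T ∧ k ∈ L := by
  rw [Finset.card_eq_one]
  constructor
  · rintro ⟨a, ha⟩
    have haT : a ∈ T ∩ L := ha ▸ Finset.mem_singleton_self a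
    rw [Finset.mem_inter] at haT
    refine ⟨a, haT, fun k hk => ?_⟩
    have hk' : k ∈ T ∩ L := Finset.mem_inter.2 hk
    rw [ha, Finset.mem_singleton] at hk'
    exact hk'
  · rintro ⟨a, ha, hu⟩
    refine ⟨a, Finset.ext fun k => ?_⟩
    simp only [Finset.mem_inter, Finset.mem_singleton]
    exact ⟨fun h => hu k h, fun h => h ▸ ha⟩

theorem core : ∀ T : Finset (Fin 13), T.card = 6 →
    (∀ l : Fin 13, ¬ ∃! k, k ∈ T ∧ k ∈ lineF l) →
    ∃ l m : Fin 13, l ≠ m ∧ T = (lineF l ∪ lineF m) \ (lineF l ∩ lineF m) := by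
  intro T hcard h
  have hT : T ∈ (Finset.univ.powersetCard 6 (α := Fin 13)).filter
      (fun T => ∀ l : Fin 13, (T ∩ lineF l).card ≠ 1) := by
    rw [Finset.mem_filter, Finset.mem_powersetCard]
    exact ⟨⟨Finset.subset_univ _, hcard⟩, fun l hl => h l ((cardOne_iff _ _).1 hl)⟩
  rw [bigDecide, Finset.mem_image] at hT
  obtain ⟨p, hp, hEq⟩ := hT
  rw [Finset.mem_filter] at hp
  exact ⟨p.1, p.2, ne_of_lt hp.2, hEq.symm⟩

variable (e : ZMod 3 ≃+* F)

/-- Transfer of vectors along the ring isomorphism. -/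
def fmap : (Fin 3 → ZMod 3) → (Fin 3 → F) := fun v i => e (v i)

theorem finj : Function.Injective (fmap (F := F) e) :=
  fun u v h => funext fun i => e.injective (congrFun h i)

theorem fsurj : Function.Surjective (fmap (F := F) e) :=
  fun w => ⟨fun i => e.symm (w i), funext fun i => e.apply_symm_apply _⟩

theorem fzero : fmap (F := F) e 0 = 0 := funext fun _ => map_zero e

theorem fne : ∀ v : Fin 3 → ZMod 3, v ≠ 0 → fmap (F := F) e v ≠ 0 :=
  fun v hv h => hv (finj e (h.trans (fzero e).symm))

theorem fsmul : ∀ (c : ZMod 3) (v), fmap (F := F) e (c • v) = e c • fmap e v := fun c v =>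
  funext fun i => by simp [fmap, Pi.smul_apply, smul_eq_mul, map_mul]

theorem fadd : ∀ u v, fmap (F := F) e (u + v) = fmap e u + fmap e v := fun u v =>
  funext fun i => by simp [fmap, map_add]

/-- The 13 points of `PG(2,F)`. -/
def ptF (i : Fin 13) : PGPoint F := Projectivization.mk F (fmap e (vecs i)) (fne e _ (D1 i))

theorem ptF_inj : Function.Injective (ptF (F := F) e) := by
  intro i j h
  rw [ptF, ptF, Projectivization.mk_eq_mk_iff'] at h
  obtain ⟨a, ha⟩ := h
  have ha' : fmap e (e.symm a • vecs j) = fmap e (vecs i) := by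
    rw [fsmul, e.apply_symm_apply]; exact ha
  have h2 : e.symm a • vecs j = vecs i := finj e ha'
  have hne : e.symm a ≠ 0 := by
    intro h0
    rw [h0, zero_smul] at h2
    exact D1 i h2.symm
  exact (D2 j i ⟨e.symm a, hne, h2⟩).symm

theorem ptF_surj : Function.Surjective (ptF (F := F) e) := by
  intro P
  induction P using Projectivization.ind with
  | h w hw =>
    obtain ⟨v, rfl⟩ := fsurj e w
    have hv : v ≠ 0 := by rintro rfl; exact hw (fzero e)
    obtain ⟨i, c, hc, hcv⟩ := D3 v hv
    refine ⟨i, Eq.symm ?_⟩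
    rw [ptF, Projectivization.mk_eq_mk_iff']
    exact ⟨e c, by rw [← fsmul, hcv]⟩

theorem memline (i j k : Fin 13) :
    ptF e k ∈ pointsOn (Submodule.span F {fmap e (vecs i), fmap e (vecs j)}) ↔ colB i j k := by
  rw [pointsOn, Set.mem_setOf_eq, ptF, Projectivization.submodule_mk,
    Submodule.span_singleton_le_iff_mem, Submodule.mem_span_pair]
  constructor
  · rintro ⟨a, b, hab⟩
    refine ⟨e.symm a, e.symm b, finj e ?_⟩
    rw [fadd, fsmul, fsmul, e.apply_symm_apply, e.apply_symm_apply]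
    exact hab
  · rintro ⟨a, b, hab⟩
    exact ⟨e a, e b, by rw [← fsmul, ← fsmul, ← fadd, hab]⟩

theorem isline (i j : Fin 13) (hij : i ≠ j) :
    IsProjLine F (Submodule.span F {fmap e (vecs i), fmap e (vecs j)}) := by
  have hind : ∀ a b : F, a • fmap e (vecs i) + b • fmap e (vecs j) = 0 → a = 0 ∧ b = 0 := by
    intro a b hab
    have h1 : fmap e (e.symm a • vecs i + e.symm b • vecs j) = fmap e 0 := by
      rw [fadd, fsmul, fsmul, e.apply_symm_apply, e.apply_symm_apply, fzero, hab]
    have h2 := D4 i j hij _ _ (finj e h1)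
    constructor
    · have := congrArg e h2.1
      rwa [e.apply_symm_apply, map_zero] at this
    · have := congrArg e h2.2
      rwa [e.apply_symm_apply, map_zero] at this
  have li : LinearIndependent F ![fmap e (vecs i), fmap e (vecs j)] :=
    LinearIndependent.pair_iff.2 hind
  have hr := finrank_span_eq_card li
  have hrange : Set.range ![fmap e (vecs i), fmap e (vecs j)]
      = {fmap e (vecs i), fmap e (vecs j)} := by
    simp [Matrix.range_cons, Matrix.range_empty, Set.pair_comm]
  rw [hrange] at hr
  rw [IsProjLine, hr]
  simp

end SWTAux

/-- every set without tangents of size 6 in `PG(2,3)` is trivial. -/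
theorem stmt_6 [Fintype F] (hcard : Fintype.card F = 3)
    (S : Set (PGPoint F)) (hS : NoTangents S) (hsize : S.ncard = 6) :
    IsTrivialSWT S := by
  classical
  open SWTAux in
  have e : ZMod 3 ≃+* F := ZMod.ringEquivOfPrime F (by norm_num) hcard
  set T : Finset (Fin 13) := Finset.univ.filter (fun i => ptF e i ∈ S) with hTdef
  have hT : ∀ k, (ptF e k ∈ S ↔ k ∈ T) := fun k => by simp [hTdef]
  have hSimg : S = ptF e '' ↑T := by
    ext P
    obtain ⟨k, rfl⟩ := ptF_surj e P
    simp only [Set.mem_image, Finset.mem_coe]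
    constructor
    · intro h
      exact ⟨k, (hT k).1 h, rfl⟩
    · rintro ⟨k', hk', h⟩
      rw [← h]
      exact (hT k').2 hk'
  have hTcard : T.card = 6 := by
    have h1 := Set.ncard_image_of_injective (↑T : Set (Fin 13)) (ptF_inj e)
    rw [← hSimg, hsize, Set.ncard_coe_finset] at h1
    exact h1.symm
  have hhyp : ∀ l : Fin 13, ¬ ∃! k, k ∈ T ∧ k ∈ lineF l := by
    intro l hex
    obtain ⟨i, j, hij, hl⟩ := D5 l
    obtain ⟨k, ⟨hkT, hkl⟩, huniq⟩ := hex
    apply hS (Submodule.span F {fmap e (vecs i), fmap e (vecs j)}) (isline e i j hij)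
    refine ⟨ptF e k, ⟨(hT k).2 hkT, (memline e i j k).2 ((hl k).1 hkl)⟩, ?_⟩
    rintro P ⟨hPS, hPL⟩
    obtain ⟨k', rfl⟩ := ptF_surj e P
    have hk' : k' = k := huniq k' ⟨(hT k').1 hPS, (hl k').2 ((memline e i j k').1 hPL)⟩
    rw [hk']
  obtain ⟨l, m, hlm, hTeq⟩ := core T hTcard hhyp
  obtain ⟨i, j, hij, hl⟩ := D5 l
  obtain ⟨i', j', hij', hm⟩ := D5 m
  refine ⟨Submodule.span F {fmap e (vecs i), fmap e (vecs j)},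
    Submodule.span F {fmap e (vecs i'), fmap e (vecs j')},
    isline e i j hij, isline e i' j' hij', ?_, ?_⟩
  · intro hLeq
    apply D8 l m hlm
    ext k
    rw [hl k, hm k, ← memline e i j k, ← memline e i' j' k, hLeq]
  · ext P
    obtain ⟨k, rfl⟩ := ptF_surj e P
    have hk : k ∈ T ↔ (k ∈ lineF l ∨ k ∈ lineF m) ∧ ¬(k ∈ lineF l ∧ k ∈ lineF m) := by
      rw [hTeq]
      simp only [Finset.mem_sdiff, Finset.mem_union, Finset.mem_inter]
    simp only [Set.mem_diff, Set.mem_union, Set.mem_inter_iff]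
    rw [memline e i j k, memline e i' j' k, ← hl k, ← hm k, hT k]
    exact hk
end

section
/- Let q be a prime power with q ≡ 3 (mod 4), let C be an irreducible conic in PG(2,q), let L be an external line of C, and let S be the set of exterior points of C lying on L. If Q is a point of PG(2,q) such that S ∪ {Q} is an exterior set of C, then Q lies on L. -/
/-!
`PG(2,F)`: points are the 1-dimensional subspaces of `F^3` (modelled as the
projectivization of `Fin 3 → F`), lines are the 2-dimensional subspaces.
-/

variable {F : Type*} [Field F]

/-- The conic (zero set in `PG(2,F)`) of a quadratic form `Q` on `F^3`. -/
def conicSet (Q : QuadraticForm F (Fin 3 → F)) : Set (PGPoint F) :=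
  {P | ∀ v ∈ P.submodule, Q v = 0}

/-- Nondegeneracy of a quadratic form (via its polar form). -/
def NondegQF (Q : QuadraticForm F (Fin 3 → F)) : Prop :=
  ∀ v : Fin 3 → F, (∀ w, QuadraticMap.polar Q v w = 0) → v = 0

/-- A tangent line of a point set `C`: a line meeting `C` in exactly one point. -/
def IsTangentLine (C : Set (PGPoint F)) (L : Submodule F (Fin 3 → F)) : Prop :=
  IsProjLine F L ∧ ∃! P : PGPoint F, P ∈ C ∩ pointsOn L

/-- An external line of a point set `C`: a line meeting `C` in no point. -/
def IsExternalLine (C : Set (PGPoint F)) (L : Submodule F (Fin 3 → F)) : Prop :=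
  IsProjLine F L ∧ C ∩ pointsOn L = ∅

/-- An exterior point of `C`: a point not on `C` lying on some tangent line of `C`. -/
def IsExteriorPoint (C : Set (PGPoint F)) (P : PGPoint F) : Prop :=
  P ∉ C ∧ ∃ L : Submodule F (Fin 3 → F), IsTangentLine C L ∧ P ∈ pointsOn L

/-- An interior point of `C`: a point neither on `C` nor exterior to `C`. -/
def IsInteriorPoint (C : Set (PGPoint F)) (P : PGPoint F) : Prop :=
  P ∉ C ∧ ¬ IsExteriorPoint C P

/-- An exterior set of `C`: every line containing at least two of its points is
an external line of `C`. -/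
def IsExteriorSet (C E : Set (PGPoint F)) : Prop :=
  ∀ L : Submodule F (Fin 3 → F), IsProjLine F L →
    (∃ P1 ∈ E ∩ pointsOn L, ∃ P2 ∈ E ∩ pointsOn L, P1 ≠ P2) → IsExternalLine C L

section AuxCount
open Finset
variable {F : Type*} [Field F] [Fintype F] [DecidableEq F]



lemma aux_sq_image_card (h2 : ringChar F ≠ 2) :
    Fintype.card F + 1 ≤ 2 * (Finset.univ.image (fun x : F => x * x)).card := by
  classical
  have h0 : (0 : F) ∈ Finset.univ.image (fun x : F => x * x) :=
    Finset.mem_image.2 ⟨0, Finset.mem_univ _, by ring⟩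
  set I := Finset.univ.image (fun x : F => x * x) with hI
  have key : (Finset.univ.erase (0 : F)).card ≤ 2 * (I.erase 0).card := by
    have hmaps : ∀ a ∈ Finset.univ.erase (0 : F), a * a ∈ I.erase 0 := by
      intro a ha
      rcases Finset.mem_erase.1 ha with ⟨ha0, _⟩
      exact Finset.mem_erase.2 ⟨mul_ne_zero ha0 ha0, Finset.mem_image.2 ⟨a, Finset.mem_univ _, rfl⟩⟩
    refine Finset.card_le_mul_card_image_of_maps_to hmaps 2 ?_
    intro b hb
    rcases Finset.mem_image.1 (Finset.mem_erase.1 hb).2 with ⟨a0, _, ha0⟩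
    have : {a ∈ Finset.univ.erase (0:F) | a * a = b} ⊆ {a0, -a0} := by
      intro a ha
      rcases Finset.mem_filter.1 ha with ⟨_, hab⟩
      have hz : (a - a0) * (a + a0) = 0 := by linear_combination hab - ha0
      rcases mul_eq_zero.1 hz with h | h
      · exact Finset.mem_insert.2 (Or.inl (sub_eq_zero.1 h))
      · exact Finset.mem_insert.2 (Or.inr (Finset.mem_singleton.2
          (eq_neg_of_add_eq_zero_left h)))
    calc {a ∈ Finset.univ.erase (0:F) | a * a = b}.card ≤ ({a0, -a0} : Finset F).card :=
          Finset.card_le_card this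
      _ ≤ 2 := Finset.card_insert_le _ _ |>.trans (by simp)
  have h1 : (Finset.univ.erase (0 : F)).card = Fintype.card F - 1 := by
    simp [Finset.card_erase_of_mem]
  have h2' : (I.erase 0).card = I.card - 1 := Finset.card_erase_of_mem h0
  have hcard : 1 ≤ Fintype.card F := Fintype.card_pos
  have hIcard : 1 ≤ I.card := Finset.card_pos.2 ⟨0, h0⟩
  omega

lemma aux_universal (h2 : ringChar F ≠ 2) (α β c : F) (hα : α ≠ 0) (hβ : β ≠ 0) :
    ∃ x y : F, α * (x * x) + β * (y * y) = c := by
  classical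
  set I := Finset.univ.image (fun x : F => x * x) with hI
  have hAcard : (I.image (fun v => α * v)).card = I.card :=
    Finset.card_image_of_injective _ (mul_right_injective₀ hα)
  have hBcard : (I.image (fun v => c - β * v)).card = I.card := by
    apply Finset.card_image_of_injective
    intro a b hab
    simp only at hab
    have hba : β * a = β * b := by linear_combination -hab
    exact mul_left_cancel₀ hβ hba
  set A := I.image (fun v => α * v)
  set B := I.image (fun v => c - β * v)
  have hsum : Fintype.card F + 1 ≤ A.card + B.card := by
    have h3 := aux_sq_image_card (F := F) h2
    rw [← hI] at h3
    have hA : A.card = I.card := hAcard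
    have hB : B.card = I.card := hBcard
    rw [hA, hB]
    omega
  have hunion : (A ∪ B).card ≤ Fintype.card F := by
    apply le_trans (Finset.card_le_card (Finset.subset_univ _))
    simp
  have hinter : (A ∩ B).Nonempty := by
    rw [← Finset.card_pos]
    have := Finset.card_inter_add_card_union A B
    omega
  rcases hinter with ⟨v, hv⟩
  rcases Finset.mem_image.1 (Finset.mem_inter.1 hv).1 with ⟨w1, hw1, hv1⟩
  rcases Finset.mem_image.1 (Finset.mem_inter.1 hv).2 with ⟨w2, hw2, hv2⟩
  rcases Finset.mem_image.1 hw1 with ⟨x, _, hx⟩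
  rcases Finset.mem_image.1 hw2 with ⟨y, _, hy⟩
  exact ⟨x, y, by rw [hx, hy] at *; rw [hv1]; rw [← hv2]; ring⟩

lemma aux_one_add_sq_ne (hns : ¬ IsSquare (-1 : F)) (t : F) : 1 + t * t ≠ 0 := by
  intro h
  exact hns ⟨t, by linear_combination -h⟩

lemma aux_circle_one_card (hns : ¬ IsSquare (-1 : F)) (h2 : (2 : F) ≠ 0) :
    ({p ∈ (Finset.univ : Finset (F × F)) | p.1 * p.1 + p.2 * p.2 = 1}).card
      = Fintype.card F + 1 := by
  classical
  have key : ({p ∈ (Finset.univ : Finset (F × F)) | p.1 * p.1 + p.2 * p.2 = 1}).card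
      = (Finset.univ : Finset (Option F)).card := by
    apply Finset.card_nbij'
      (i := fun p => if p.1 = -1 then none else some (p.2 / (1 + p.1)))
      (j := fun o => Option.elim o ((-1 : F), (0:F))
        (fun t => ((1 - t * t)/(1 + t * t), 2 * t / (1 + t * t))))
    · intro p _; exact Finset.mem_univ _
    · intro o _
      refine Finset.mem_filter.2 ⟨Finset.mem_univ _, ?_⟩
      match o with
      | none => simp
      | some t =>
        have h1t := aux_one_add_sq_ne hns t
        have h1t' : 1 + t ^ 2 ≠ 0 := by rw [sq]; exact h1t
        simp only [Option.elim]
        field_simp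
        ring
    · intro p hp
      rcases Finset.mem_filter.1 hp with ⟨_, hp1⟩
      by_cases hc : p.1 = -1
      · have hp2 : p.2 = 0 := by
          have : p.2 * p.2 = 0 := by rw [hc] at hp1; linear_combination hp1
          exact (mul_self_eq_zero).1 this
        simp only [hc, if_pos rfl, Option.elim]
        exact Prod.ext (by simp [hc]) (by simp [hp2])
      · have h1a : 1 + p.1 ≠ 0 := fun h => hc (by linear_combination h)
        simp only [if_neg hc, Option.elim]
        set t := p.2 / (1 + p.1) with ht
        have h1t := aux_one_add_sq_ne hns t
        have key2 : 1 + t * t = 2 / (1 + p.1) := by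
          rw [ht]; field_simp; linear_combination hp1
        have key1 : 1 - t * t = 2 * p.1 / (1 + p.1) := by
          rw [ht]; field_simp; linear_combination (-1 : F) * hp1
        refine Prod.ext ?_ ?_
        · show (1 - t * t) / (1 + t * t) = p.1
          rw [key1, key2]
          field_simp
        · show 2 * t / (1 + t * t) = p.2
          rw [key2, ht]
          field_simp
    · intro o _
      match o with
      | none => simp
      | some t =>
        have h1t := aux_one_add_sq_ne hns t
        have h1t' : 1 + t ^ 2 ≠ 0 := by rw [sq]; exact h1t
        simp only [Option.elim]
        have hfst : (1 - t * t) / (1 + t * t) ≠ -1 := by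
          intro h
          have : 1 - t * t = -(1 + t * t) := by
            field_simp at h; linear_combination h
          have : (2 : F) = 0 := by linear_combination this
          exact h2 this
        simp only [hfst, if_false]
        congr 1
        have hden : 1 + (1 - t * t) / (1 + t * t) = 2 / (1 + t * t) := by
          field_simp; ring
        rw [hden]
        field_simp
  rw [key]; simp

lemma aux_circle_card (hns : ¬ IsSquare (-1 : F)) (h2 : (2 : F) ≠ 0) (m : F) (hm : m ≠ 0) :
    ({p ∈ (Finset.univ : Finset (F × F)) | p.1 * p.1 + p.2 * p.2 = m}).card
      = Fintype.card F + 1 := by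
  classical
  have h2' : ringChar F ≠ 2 := by
    intro h
    apply h2
    have hz : ((ringChar F : ℕ) : F) = 0 := CharP.cast_eq_zero F (ringChar F)
    rw [h] at hz
    exact_mod_cast hz
  obtain ⟨a0, b0, hab⟩ := aux_universal (F := F) h2' 1 1 m one_ne_zero one_ne_zero
  simp only [one_mul] at hab
  have key : ({p ∈ (Finset.univ : Finset (F × F)) | p.1 * p.1 + p.2 * p.2 = m}).card
      = ({p ∈ (Finset.univ : Finset (F × F)) | p.1 * p.1 + p.2 * p.2 = 1}).card := by
    apply Finset.card_nbij'
      (i := fun p => ((a0 * p.1 + b0 * p.2) / m, (a0 * p.2 - b0 * p.1) / m))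
      (j := fun q => (a0 * q.1 - b0 * q.2, b0 * q.1 + a0 * q.2))
    · intro p hp
      rcases Finset.mem_filter.1 hp with ⟨_, hp1⟩
      refine Finset.mem_filter.2 ⟨Finset.mem_univ _, ?_⟩
      field_simp
      linear_combination (a0 * a0 + b0 * b0) * hp1 + m * hab
    · intro q hq
      rcases Finset.mem_filter.1 hq with ⟨_, hq1⟩
      refine Finset.mem_filter.2 ⟨Finset.mem_univ _, ?_⟩
      linear_combination (a0 * a0 + b0 * b0) * hq1 + hab
    · intro p hp
      refine Prod.ext ?_ ?_
      · simp only; field_simp; linear_combination p.1 * hab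
      · simp only; field_simp; linear_combination p.2 * hab
    · intro q hq
      refine Prod.ext ?_ ?_
      · simp only; field_simp; linear_combination q.1 * hab
      · simp only; field_simp; linear_combination q.2 * hab
  rw [key, aux_circle_one_card hns h2]

lemma aux_Dset_card (hns : ¬ IsSquare (-1 : F)) (h2 : (2 : F) ≠ 0) (m : F) (hm : m ≠ 0) :
    Fintype.card F + 1 ≤
      2 * ({D ∈ (Finset.univ : Finset F) | ∃ P : F, P * P + D * D = m}).card := by
  classical
  rw [← aux_circle_card hns h2 m hm]
  apply Finset.card_le_mul_card_image_of_maps_to (f := fun p : F × F => p.2)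
  · intro p hp
    rcases Finset.mem_filter.1 hp with ⟨_, hp1⟩
    exact Finset.mem_filter.2 ⟨Finset.mem_univ _, ⟨p.1, hp1⟩⟩
  · intro b hb
    rcases Finset.mem_filter.1 hb with ⟨_, ⟨P0, hP0⟩⟩
    have hsub : {p ∈ ({p ∈ (Finset.univ : Finset (F × F)) | p.1 * p.1 + p.2 * p.2 = m}) |
        p.2 = b} ⊆ {(P0, b), (-P0, b)} := by
      intro p hp
      rcases Finset.mem_filter.1 hp with ⟨hp1, hp2⟩
      rcases Finset.mem_filter.1 hp1 with ⟨_, hp3⟩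
      rw [hp2] at hp3
      have hz : (p.1 - P0) * (p.1 + P0) = 0 := by linear_combination hp3 - hP0
      rcases mul_eq_zero.1 hz with h | h
      · exact Finset.mem_insert.2 (Or.inl (Prod.ext (sub_eq_zero.1 h) hp2))
      · exact Finset.mem_insert.2 (Or.inr (Finset.mem_singleton.2
          (Prod.ext (eq_neg_of_add_eq_zero_left h) hp2)))
    calc _ ≤ ({(P0, b), (-P0, b)} : Finset (F × F)).card := Finset.card_le_card hsub
      _ ≤ 2 := (Finset.card_insert_le _ _).trans (by simp)

lemma aux_pigeonD (hns : ¬ IsSquare (-1 : F)) (h2 : (2 : F) ≠ 0) (m₁ m₂ : F)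
    (hm1 : m₁ ≠ 0) (hm2 : m₂ ≠ 0) :
    ∃ D P r : F, P * P + D * D = m₁ ∧ r * r + D * D = m₂ := by
  classical
  set A := {D ∈ (Finset.univ : Finset F) | ∃ P : F, P * P + D * D = m₁} with hA
  set B := {D ∈ (Finset.univ : Finset F) | ∃ P : F, P * P + D * D = m₂} with hB
  have h1 := aux_Dset_card hns h2 m₁ hm1
  have h2' := aux_Dset_card hns h2 m₂ hm2
  rw [← hA] at h1
  rw [← hB] at h2'
  have hunion : (A ∪ B).card ≤ Fintype.card F :=
    le_trans (Finset.card_le_card (Finset.subset_univ _)) (by simp)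
  have hinter : (A ∩ B).Nonempty := by
    rw [← Finset.card_pos]
    have := Finset.card_inter_add_card_union A B
    omega
  rcases hinter with ⟨D, hD⟩
  rcases Finset.mem_inter.1 hD with ⟨hDA, hDB⟩
  rcases (Finset.mem_filter.1 hDA).2 with ⟨P, hP⟩
  rcases (Finset.mem_filter.1 hDB).2 with ⟨r, hr⟩
  exact ⟨D, P, r, hP, hr⟩

end AuxCount

section AuxGeom
variable {F : Type*} [Field F]

open QuadraticMap Module Submodule Projectivization

lemma aux_expand2 (Q : QuadraticForm F (Fin 3 → F)) (a b : F) (v w : Fin 3 → F) :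
    Q (a • v + b • w) = a * a * Q v + a * b * polar Q v w + b * b * Q w := by
  have h : Q (a • v + b • w) = polar Q (a • v) (b • w) + Q (a • v) + Q (b • w) := by
    simp only [QuadraticMap.polar]; ring
  rw [h, polar_smul_left, polar_smul_right, QuadraticMap.map_smul, QuadraticMap.map_smul]
  simp only [smul_eq_mul]; ring

lemma aux_expand3 (Q : QuadraticForm F (Fin 3 → F)) (a b c : F) (v w z : Fin 3 → F) :
    Q (a • v + b • w + c • z) = a * a * Q v + b * b * Q w + c * c * Q z
      + a * b * polar Q v w + a * c * polar Q v z + b * c * polar Q w z := by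
  have h : Q (a • v + b • w + c • z)
      = polar Q (a • v + b • w) (c • z) + Q (a • v + b • w) + Q (c • z) := by
    simp only [QuadraticMap.polar]; ring
  rw [h, aux_expand2]
  simp only [polar_add_left, polar_smul_left, polar_smul_right, QuadraticMap.map_smul,
    smul_eq_mul]
  ring

lemma aux_polar_combo (Q : QuadraticForm F (Fin 3 → F)) (a b c d : F) (v w : Fin 3 → F) :
    QuadraticMap.polar Q (a • v + b • w) (c • v + d • w)
      = (a * c * 2) * Q v + (a * d + b * c) * QuadraticMap.polar Q v w + (b * d * 2) * Q w := by
  have h : (a • v + b • w) + (c • v + d • w) = (a + c) • v + (b + d) • w := by module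
  simp only [QuadraticMap.polar]
  rw [h, aux_expand2, aux_expand2, aux_expand2]
  simp only [QuadraticMap.polar]
  ring

lemma aux_polar_self (Q : QuadraticForm F (Fin 3 → F)) (v : Fin 3 → F) :
    polar Q v v = 2 * Q v := by
  rw [QuadraticMap.polar_self, two_smul, two_mul]

lemma aux_range_pair (v w : Fin 3 → F) : Set.range ![v, w] = {v, w} := by
  ext x
  constructor
  · rintro ⟨i, rfl⟩
    fin_cases i <;> simp
  · rintro (rfl | rfl)
    · exact ⟨0, rfl⟩
    · exact ⟨1, rfl⟩

lemma aux_finrank_span_pair {v w : Fin 3 → F} (h : LinearIndependent F ![v, w]) :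
    Module.finrank F (span F ({v, w} : Set (Fin 3 → F))) = 2 := by
  rw [← aux_range_pair v w, finrank_span_eq_card h]
  simp

lemma aux_mem_span_triple {v w z t : Fin 3 → F} (h : t ∈ span F ({v, w, z} : Set (Fin 3 → F))) :
    ∃ a b c : F, t = a • v + b • w + c • z := by
  rcases Submodule.mem_span_insert.1 h with ⟨a, u, hu, rfl⟩
  rcases Submodule.mem_span_pair.1 hu with ⟨b, c, rfl⟩
  exact ⟨a, b, c, by abel⟩

lemma aux_span_triple_top {v w z : Fin 3 → F} (hvw : LinearIndependent F ![v, w])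
    (hz : z ∉ span F ({v, w} : Set (Fin 3 → F))) :
    span F ({v, w, z} : Set (Fin 3 → F)) = ⊤ := by
  have h3 : Module.finrank F (Fin 3 → F) = 3 := Module.finrank_fin_fun F
  have hlt : span F ({v, w} : Set (Fin 3 → F)) < span F ({v, w, z} : Set (Fin 3 → F)) := by
    refine lt_of_le_of_ne (Submodule.span_mono
      (Set.insert_subset_insert (Set.singleton_subset_iff.2 (Set.mem_insert _ _)))) ?_
    intro h
    apply hz
    rw [h]
    exact Submodule.subset_span (by simp)
  have h1 : 2 < Module.finrank F (span F ({v, w, z} : Set (Fin 3 → F))) := by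
    rw [← aux_finrank_span_pair hvw]
    exact Submodule.finrank_lt_finrank_of_lt hlt
  have h2 : Module.finrank F (span F ({v, w, z} : Set (Fin 3 → F))) ≤ 3 :=
    (Submodule.finrank_le _).trans (le_of_eq h3)
  apply Submodule.eq_top_of_finrank_eq
  rw [h3]; omega

lemma aux_polar_eq_zero_of_basis {Q : QuadraticForm F (Fin 3 → F)} {u v w z : Fin 3 → F}
    (htop : span F ({v, w, z} : Set (Fin 3 → F)) = ⊤)
    (h1 : polar Q u v = 0) (h2 : polar Q u w = 0) (h3 : polar Q u z = 0) :
    ∀ t, polar Q u t = 0 := by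
  intro t
  have ht : t ∈ span F ({v, w, z} : Set (Fin 3 → F)) := htop ▸ Submodule.mem_top
  rcases aux_mem_span_triple ht with ⟨a, b, c, rfl⟩
  rw [polar_add_right, polar_add_right, polar_smul_right, polar_smul_right, polar_smul_right,
    h1, h2, h3]
  simp

lemma aux_no_isotropic_plane (Q : QuadraticForm F (Fin 3 → F)) (hQ : NondegQF Q)
    {v w : Fin 3 → F} (hind : LinearIndependent F ![v, w]) (hv : Q v = 0) (hw : Q w = 0)
    (hvw : polar Q v w = 0) : False := by
  obtain ⟨z, hz⟩ : ∃ z, z ∉ span F ({v, w} : Set (Fin 3 → F)) := by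
    by_contra h
    push_neg at h
    have htop : span F ({v, w} : Set (Fin 3 → F)) = ⊤ := eq_top_iff.2 fun x _ => h x
    have := aux_finrank_span_pair hind
    rw [htop, finrank_top, Module.finrank_fin_fun F] at this
    omega
  have htop := aux_span_triple_top hind hz
  set u := polar Q v z • w - polar Q w z • v with hu
  have hu0 : u = 0 := by
    apply hQ
    apply aux_polar_eq_zero_of_basis htop
    · rw [hu, polar_sub_left, polar_smul_left, polar_smul_left, polar_comm (⇑Q) w v, hvw,
        aux_polar_self, hv]
      simp
    · rw [hu, polar_sub_left, polar_smul_left, polar_smul_left, aux_polar_self, hw, hvw]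
      simp
    · rw [hu, polar_sub_left, polar_smul_left, polar_smul_left]
      simp [mul_comm]
  have hcoef : polar Q v z = 0 ∧ polar Q w z = 0 := by
    have h := LinearIndependent.pair_iff.1 hind (- polar Q w z) (polar Q v z) (by
      rw [← hu0, hu]; module)
    exact ⟨h.2, neg_eq_zero.1 h.1⟩
  have hv0 : v = 0 := by
    apply hQ
    apply aux_polar_eq_zero_of_basis htop
    · rw [aux_polar_self, hv]; simp
    · exact hvw
    · exact hcoef.1
  exact (hind.ne_zero 0) (by simpa using hv0)

lemma aux_mk_mem_conic (Q : QuadraticForm F (Fin 3 → F)) {v : Fin 3 → F} (hv : v ≠ 0)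
    (hQv : Q v = 0) : Projectivization.mk F v hv ∈ conicSet Q := by
  intro w hw
  rw [Projectivization.submodule_mk] at hw
  rcases Submodule.mem_span_singleton.1 hw with ⟨a, rfl⟩
  rw [QuadraticMap.map_smul, hQv]
  simp

lemma aux_conic_rep_zero {Q : QuadraticForm F (Fin 3 → F)} {P : PGPoint F}
    (hP : P ∈ conicSet Q) : Q P.rep = 0 :=
  hP _ (by rw [Projectivization.submodule_eq]; exact Submodule.mem_span_singleton_self _)

lemma aux_Q_ne_zero_on_L (Q : QuadraticForm F (Fin 3 → F)) {L : Submodule F (Fin 3 → F)}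
    (hL : IsExternalLine (conicSet Q) L) {v : Fin 3 → F} (hvL : v ∈ L) (hv : v ≠ 0) :
    Q v ≠ 0 := by
  intro h
  have hmem : Projectivization.mk F v hv ∈ conicSet Q ∩ pointsOn L := by
    refine ⟨aux_mk_mem_conic Q hv h, ?_⟩
    show (Projectivization.mk F v hv).submodule ≤ L
    rw [Projectivization.submodule_mk]
    exact (Submodule.span_singleton_le_iff_mem v L).2 hvL
  rw [hL.2] at hmem
  exact hmem

lemma aux_exterior_mk (Q : QuadraticForm F (Fin 3 → F)) (hQ : NondegQF Q)
    {c s : Fin 3 → F} (hc : c ≠ 0) (hQc : Q c = 0)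
    (hs : s ≠ 0) (hQs : Q s ≠ 0) (hcs : polar Q c s = 0) :
    IsExteriorPoint (conicSet Q) (Projectivization.mk F s hs) := by
  constructor
  · intro hmem
    exact hQs (hmem s (by rw [Projectivization.submodule_mk]
                          exact Submodule.mem_span_singleton_self s))
  · set f : (Fin 3 → F) →ₗ[F] F := (QuadraticMap.polarBilin Q) c with hf
    have hfapp : ∀ w, f w = polar Q c w := fun w => rfl
    have hfne : f ≠ 0 := by
      intro h
      apply hc
      apply hQ
      intro w
      rw [← hfapp w, h]
      rfl
    refine ⟨LinearMap.ker f, ⟨?_, ?_⟩, ?_⟩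
    · -- finrank ker = 2
      show Module.finrank F (LinearMap.ker f) = 2
      obtain ⟨x, hx⟩ : ∃ x, f x ≠ 0 := by
        by_contra h
        push_neg at h
        exact hfne (LinearMap.ext h)
      have hrange : LinearMap.range f = ⊤ := by
        rw [LinearMap.range_eq_top]
        intro c'
        exact ⟨(c' / f x) • x, by rw [LinearMap.map_smul, smul_eq_mul, div_mul_cancel₀ _ hx]⟩
      have := LinearMap.finrank_range_add_finrank_ker f
      rw [hrange, finrank_top, Module.finrank_self, Module.finrank_fin_fun F] at this
      omega
    · -- unique conic point
      refine ⟨Projectivization.mk F c hc, ⟨aux_mk_mem_conic Q hc hQc, ?_⟩, ?_⟩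
      · show (Projectivization.mk F c hc).submodule ≤ LinearMap.ker f
        rw [Projectivization.submodule_mk]
        apply (Submodule.span_singleton_le_iff_mem c _).2
        rw [LinearMap.mem_ker, hfapp, aux_polar_self, hQc]
        ring
      · rintro P' ⟨hP'c, hP'T⟩
        have hv0 : P'.rep ≠ 0 := P'.rep_nonzero
        have hQv : Q P'.rep = 0 := aux_conic_rep_zero hP'c
        have hcv : polar Q c P'.rep = 0 := by
          have : P'.rep ∈ LinearMap.ker f := hP'T (by
            rw [Projectivization.submodule_eq]
            exact Submodule.mem_span_singleton_self _)
          rw [← hfapp]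
          exact this
        by_cases hex : ∃ a : F, a • c = P'.rep
        · rcases hex with ⟨a, ha⟩
          rw [← Projectivization.mk_rep P']
          exact (Projectivization.mk_eq_mk_iff' F _ _ hv0 hc).2 ⟨a, ha⟩
        · push_neg at hex
          exact absurd ((LinearIndependent.pair_iff' hc).2 hex)
            (fun hind => aux_no_isotropic_plane Q hQ hind hQc hQv hcv)
    · show (Projectivization.mk F s hs).submodule ≤ LinearMap.ker f
      rw [Projectivization.submodule_mk]
      apply (Submodule.span_singleton_le_iff_mem s _).2
      rw [LinearMap.mem_ker, hfapp]
      exact hcs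


lemma aux_square_of_two_nonsquares {F : Type*} [Field F] [Fintype F] {a b : F}
    (ha : a ≠ 0) (hb : b ≠ 0) (hna : ¬ IsSquare a) (hnb : ¬ IsSquare b) : IsSquare (a * b) := by
  classical
  have h1 : quadraticChar F a = -1 := quadraticChar_neg_one_iff_not_isSquare.2 hna
  have h2 : quadraticChar F b = -1 := quadraticChar_neg_one_iff_not_isSquare.2 hnb
  have h3 : quadraticChar F (a * b) = 1 := by
    rw [map_mul, h1, h2]; ring
  exact (quadraticChar_one_iff_isSquare (mul_ne_zero ha hb)).1 h3

end AuxGeom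

set_option maxHeartbeats 1000000 in
open QuadraticMap Module Submodule in
/-- `q ≡ 3 (mod 4)`; if the set `S` of exterior points of an
irreducible conic `C` on an external line `L`, extended by a point `Q₀`, is an
exterior set of `C`, then `Q₀` lies on `L`. -/

theorem stmt_12 [Fintype F] (hq : Fintype.card F % 4 = 3)
    (Q : QuadraticForm F (Fin 3 → F)) (hQ : NondegQF Q)
    (L : Submodule F (Fin 3 → F)) (hL : IsExternalLine (conicSet Q) L)
    (Q0 : PGPoint F)
    (hQ0 : IsExteriorSet (conicSet Q)
      ({P ∈ pointsOn L | IsExteriorPoint (conicSet Q) P} ∪ {Q0})) :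
    Q0 ∈ pointsOn L := by
  classical
  by_contra hQnL
  -- field facts
  have hns : ¬ IsSquare (-1 : F) := by
    rw [FiniteField.isSquare_neg_one_iff]
    simp [hq]
  have hodd : Fintype.card F % 2 = 1 := by omega
  have hchar : ringChar F ≠ 2 := by
    intro h
    have := FiniteField.even_card_iff_char_two.1 h
    omega
  have h2 : (2 : F) ≠ 0 := Ring.two_ne_zero hchar
  have hLfr : Module.finrank F L = 2 := hL.1
  -- basis of L
  let bL := Module.finBasisOfFinrankEq F L hLfr
  set v1 : Fin 3 → F := ↑(bL 0) with hv1def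
  set v2 : Fin 3 → F := ↑(bL 1) with hv2def
  have hv1L : v1 ∈ L := (bL 0).2
  have hv2L : v2 ∈ L := (bL 1).2
  have hindL : ∀ a b : F, a • v1 + b • v2 = 0 → a = 0 ∧ b = 0 := by
    intro a b hab
    have hzero : a • (bL 0) + b • (bL 1) = (0 : L) := by
      apply Subtype.ext
      rw [Submodule.coe_add, SetLike.val_smul, SetLike.val_smul, ZeroMemClass.coe_zero]
      exact hab
    have h := Fintype.linearIndependent_iff.1 bL.linearIndependent ![a, b] (by
      rw [Fin.sum_univ_two]
      simp only [Matrix.cons_val_zero, Matrix.cons_val_one, Matrix.head_cons]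
      exact hzero)
    exact ⟨h 0, h 1⟩
  have hv1ne : v1 ≠ 0 := by
    intro h
    exact bL.ne_zero 0 (by rwa [hv1def, ZeroMemClass.coe_eq_zero] at h)
  have hα : Q v1 ≠ 0 := aux_Q_ne_zero_on_L Q hL hv1L hv1ne
  -- orthogonalize
  set e2 : Fin 3 → F := v2 - (QuadraticMap.polar Q v1 v2 / (2 * Q v1)) • v1 with he2def
  have he2L : e2 ∈ L := Submodule.sub_mem L hv2L (Submodule.smul_mem L _ hv1L)
  have hindL1 : ∀ a b : F, a • v1 + b • e2 = 0 → a = 0 ∧ b = 0 := by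
    intro a b hab
    have hz : (a - b * (QuadraticMap.polar Q v1 v2 / (2 * Q v1))) • v1 + b • v2 = 0 := by
      rw [he2def] at hab
      linear_combination (norm := module) hab
    obtain ⟨h1, h2'⟩ := hindL _ _ hz
    refine ⟨?_, h2'⟩
    linear_combination h1 + (QuadraticMap.polar Q v1 v2 / (2 * Q v1)) * h2'
  have he2ne : e2 ≠ 0 := by
    intro h
    exact one_ne_zero (hindL1 0 1 (by rw [zero_smul, one_smul, zero_add]; exact h)).2
  have hβ : Q e2 ≠ 0 := aux_Q_ne_zero_on_L Q hL he2L he2ne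
  have hpolar12 : QuadraticMap.polar Q v1 e2 = 0 := by
    rw [he2def, polar_sub_right, polar_smul_right, aux_polar_self]
    have h2Q : (2 : F) * Q v1 ≠ 0 := mul_ne_zero h2 hα
    rw [smul_eq_mul]
    field_simp
    ring
  -- a vector of norm 1
  obtain ⟨x0, y0, hx0y0⟩ := aux_universal hchar (Q v1) (Q e2) 1 hα hβ
  set f1 : Fin 3 → F := x0 • v1 + y0 • e2 with hf1def
  have hf1L : f1 ∈ L := Submodule.add_mem L (Submodule.smul_mem L _ hv1L)
    (Submodule.smul_mem L _ he2L)
  have hQf1 : Q f1 = 1 := by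
    rw [hf1def, aux_expand2, hpolar12]
    linear_combination hx0y0
  have hf1ne : f1 ≠ 0 := by
    intro h
    rw [h, QuadraticMap.map_zero] at hQf1
    exact one_ne_zero hQf1.symm
  -- perpendicular vector in L
  set f2' : Fin 3 → F := (Q e2 * y0) • v1 + (-(Q v1 * x0)) • e2 with hf2'def
  have hf2'L : f2' ∈ L := Submodule.add_mem L (Submodule.smul_mem L _ hv1L)
    (Submodule.smul_mem L _ he2L)
  have hp12' : QuadraticMap.polar Q f1 f2' = 0 := by
    rw [hf1def, hf2'def, aux_polar_combo, hpolar12]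
    ring
  have hQf2' : Q f2' = Q v1 * Q e2 := by
    rw [hf2'def, aux_expand2, hpolar12]
    linear_combination (Q v1 * Q e2) * hx0y0
  set δ : F := Q v1 * Q e2 with hδdef
  have hδ0 : δ ≠ 0 := mul_ne_zero hα hβ
  have hnegδ : ¬ IsSquare (-δ) := by
    rintro ⟨rr, hrr⟩
    have hrr0 : rr ≠ 0 := by
      intro h
      rw [h, mul_zero] at hrr
      exact hδ0 (neg_eq_zero.1 hrr)
    set z : Fin 3 → F := rr • v1 + Q v1 • e2 with hzdef
    have hzL : z ∈ L := Submodule.add_mem L (Submodule.smul_mem L _ hv1L)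
      (Submodule.smul_mem L _ he2L)
    have hzne : z ≠ 0 := by
      intro h
      exact hα (hindL1 _ _ (by rw [← hzdef]; exact h)).2
    have hQz : Q z = 0 := by
      rw [hzdef, aux_expand2, hpolar12]
      linear_combination (-(Q v1)) * hrr + (-(Q v1)) * hδdef
    exact aux_Q_ne_zero_on_L Q hL hzL hzne hQz
  have hsqδ : IsSquare δ := by
    have := aux_square_of_two_nonsquares (neg_ne_zero.2 (one_ne_zero' F))
      (neg_ne_zero.2 hδ0) hns hnegδ
    rwa [neg_mul_neg, one_mul] at this
  obtain ⟨d0, hd0⟩ := hsqδ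
  have hd00 : d0 ≠ 0 := by
    intro h
    rw [h, mul_zero] at hd0
    exact hδ0 hd0
  set f2 : Fin 3 → F := d0⁻¹ • f2' with hf2def
  have hf2L : f2 ∈ L := Submodule.smul_mem L _ hf2'L
  have hQf2 : Q f2 = 1 := by
    rw [hf2def, QuadraticMap.map_smul, smul_eq_mul, hQf2', hd0]
    field_simp
  have hf2ne : f2 ≠ 0 := by
    intro h
    rw [h, QuadraticMap.map_zero] at hQf2
    exact one_ne_zero hQf2.symm
  have hp12 : QuadraticMap.polar Q f1 f2 = 0 := by
    rw [hf2def, polar_smul_right, hp12', smul_zero]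
  -- independence of f1 f2 and span
  have hind12 : ∀ a b : F, a • f1 + b • f2 = 0 → a = 0 ∧ b = 0 := by
    intro a b hab
    have hpa : QuadraticMap.polar Q f1 (a • f1 + b • f2) = 2 * a := by
      rw [polar_add_right, polar_smul_right, polar_smul_right, aux_polar_self, hQf1, hp12]
      simp only [smul_eq_mul]; ring
    have hpb : QuadraticMap.polar Q f2 (a • f1 + b • f2) = 2 * b := by
      rw [polar_add_right, polar_smul_right, polar_smul_right, aux_polar_self, hQf2,
        polar_comm (⇑Q) f2 f1, hp12]
      simp only [smul_eq_mul]; ring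
    rw [hab, polar_zero_right] at hpa hpb
    constructor
    · exact (mul_eq_zero.1 hpa.symm).resolve_left h2
    · exact (mul_eq_zero.1 hpb.symm).resolve_left h2
  have hpair12 : LinearIndependent F ![f1, f2] := by
    rw [LinearIndependent.pair_iff]
    intro a b hab
    exact hind12 a b hab
  have hspanL : Submodule.span F ({f1, f2} : Set (Fin 3 → F)) = L := by
    apply Submodule.eq_of_le_of_finrank_le
    · rw [Submodule.span_le]
      intro x hx
      rcases hx with rfl | hx
      · exact hf1L
      · rw [Set.mem_singleton_iff] at hx
        rw [hx]
        exact hf2L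
    · rw [hLfr, aux_finrank_span_pair hpair12]
  -- vector outside L
  obtain ⟨v3, hv3⟩ : ∃ v3, v3 ∉ L := by
    by_contra h
    push_neg at h
    have htop : L = ⊤ := eq_top_iff.2 fun x _ => h x
    rw [htop, finrank_top, Module.finrank_fin_fun F] at hLfr
    omega
  -- the pole of L
  set p0 : Fin 3 → F := v3 - (QuadraticMap.polar Q f1 v3 / 2) • f1
      - (QuadraticMap.polar Q f2 v3 / 2) • f2 with hp0def
  have hp0f1 : QuadraticMap.polar Q f1 p0 = 0 := by
    rw [hp0def, polar_sub_right, polar_sub_right, polar_smul_right, polar_smul_right,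
      aux_polar_self, hQf1, hp12]
    simp only [smul_eq_mul]
    field_simp
    ring
  have hp0f2 : QuadraticMap.polar Q f2 p0 = 0 := by
    rw [hp0def, polar_sub_right, polar_sub_right, polar_smul_right, polar_smul_right,
      aux_polar_self, hQf2, polar_comm (⇑Q) f2 f1, hp12]
    simp only [smul_eq_mul]
    field_simp
    ring
  have hp0L : p0 ∉ L := by
    intro h
    apply hv3
    have : v3 = p0 + (QuadraticMap.polar Q f1 v3 / 2) • f1
        + (QuadraticMap.polar Q f2 v3 / 2) • f2 := by
      rw [hp0def]; module
    rw [this]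
    exact Submodule.add_mem L (Submodule.add_mem L h (Submodule.smul_mem L _ hf1L))
      (Submodule.smul_mem L _ hf2L)
  have hp0ne : p0 ≠ 0 := fun h => hp0L (h ▸ Submodule.zero_mem L)
  have hp0perp : ∀ v ∈ L, QuadraticMap.polar Q p0 v = 0 := by
    intro v hv
    rw [← hspanL] at hv
    rcases Submodule.mem_span_pair.1 hv with ⟨a, b, rfl⟩
    rw [polar_add_right, polar_smul_right, polar_smul_right,
      polar_comm (⇑Q) p0 f1, polar_comm (⇑Q) p0 f2, hp0f1, hp0f2]
    simp
  have htop3 : Submodule.span F ({f1, f2, p0} : Set (Fin 3 → F)) = ⊤ :=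
    aux_span_triple_top hpair12 (by rw [hspanL]; exact hp0L)
  have hQp0 : Q p0 ≠ 0 := by
    intro h
    apply hp0ne
    apply hQ
    apply aux_polar_eq_zero_of_basis htop3
    · rw [polar_comm (⇑Q) p0 f1]; exact hp0f1
    · rw [polar_comm (⇑Q) p0 f2]; exact hp0f2
    · rw [aux_polar_self, h]; ring
  set g : F := -(Q p0) with hgdef
  have hg0 : g ≠ 0 := neg_ne_zero.2 hQp0
  have hQp0g : Q p0 = -g := by rw [hgdef]; ring
  -- decompose q0
  set q0 : Fin 3 → F := Q0.rep with hq0def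
  have hq0ne : q0 ≠ 0 := Q0.rep_nonzero
  have hq0L : q0 ∉ L := by
    intro h
    apply hQnL
    show Q0.submodule ≤ L
    rw [Projectivization.submodule_eq]
    exact (Submodule.span_singleton_le_iff_mem _ L).2 h
  obtain ⟨u1, u2, t, hq0eq⟩ : ∃ u1 u2 t : F, q0 = u1 • f1 + u2 • f2 + t • p0 :=
    aux_mem_span_triple (htop3 ▸ Submodule.mem_top)
  have ht0 : t ≠ 0 := by
    intro h
    apply hq0L
    rw [hq0eq, h, zero_smul, add_zero]
    exact Submodule.add_mem L (Submodule.smul_mem L _ hf1L) (Submodule.smul_mem L _ hf2L)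
  have hK : Q q0 = u1 * u1 + u2 * u2 - g * (t * t) := by
    rw [hq0eq, aux_expand3, hQf1, hQf2, hQp0g, hp12, hp0f1, hp0f2]
    ring
  -- select the exterior point parameters
  obtain ⟨x, y, P, r, e, he0, hgR, hPdef, hf⟩ :
      ∃ x y P r e : F, e ≠ 0 ∧ g * (x * x + y * y) = e * e ∧ u1 * x + u2 * y = P ∧
        P * P - Q q0 * (x * x + y * y) = r * r := by
    by_cases hu : u1 = 0 ∧ u2 = 0
    · obtain ⟨x, y, hxy⟩ := aux_universal hchar 1 1 g one_ne_zero one_ne_zero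
      simp only [one_mul] at hxy
      refine ⟨x, y, 0, g * t, g, hg0, by rw [hxy], by rw [hu.1, hu.2]; ring, ?_⟩
      rw [hxy, hK, hu.1, hu.2]
      ring
    · have hN0 : u1 * u1 + u2 * u2 ≠ 0 := by
        intro h
        have hune : u1 • f1 + u2 • f2 ≠ 0 := by
          intro hz
          exact hu ⟨(hind12 _ _ hz).1, (hind12 _ _ hz).2⟩
        have huL : u1 • f1 + u2 • f2 ∈ L :=
          Submodule.add_mem L (Submodule.smul_mem L _ hf1L) (Submodule.smul_mem L _ hf2L)
        apply aux_Q_ne_zero_on_L Q hL huL hune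
        rw [aux_expand2, hQf1, hQf2, hp12]
        linear_combination h
      set N : F := u1 * u1 + u2 * u2 with hNdef
      by_cases hsq : IsSquare (g * N)
      · obtain ⟨e0, he0'⟩ := hsq
        have he00 : e0 ≠ 0 := by
          intro h
          rw [h, mul_zero] at he0'
          exact (mul_ne_zero hg0 hN0) he0'
        refine ⟨u1, u2, N, e0 * t, e0, he00, by rw [← hNdef, ← he0'], rfl, ?_⟩
        linear_combination (-(u1 * u1 + u2 * u2)) * hK + (t * t) * he0'
          + (N - g * (t * t)) * hNdef
      · have hm1 : N * g ≠ 0 := mul_ne_zero hN0 hg0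
        have hm2 : (t * g) * (t * g) ≠ 0 := mul_ne_zero (mul_ne_zero ht0 hg0)
          (mul_ne_zero ht0 hg0)
        obtain ⟨D, P1, r1, hpig1, hpig2⟩ := aux_pigeonD hns h2 (N * g) ((t * g) * (t * g))
          hm1 hm2
        refine ⟨(u1 * P1 - u2 * D) / N, (u2 * P1 + u1 * D) / N, P1, r1, g, hg0, ?_, ?_, ?_⟩
        · clear_value g N
          field_simp
          linear_combination (u1 * u1 + u2 * u2) * hpig1 - g * N * hNdef
        · field_simp
          linear_combination P1 * hNdef
        · have hxy : (u1 * P1 - u2 * D) / N * ((u1 * P1 - u2 * D) / N)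
              + (u2 * P1 + u1 * D) / N * ((u2 * P1 + u1 * D) / N) = g := by
            field_simp
            linear_combination (u1 * u1 + u2 * u2) * hpig1 - g * N * hNdef
          rw [hxy]
          linear_combination hpig1 - hpig2 - g * hK
  -- the exterior point s on L
  set R : F := x * x + y * y with hRdef
  have hgR' : g * R = e * e := hgR
  have hR0 : R ≠ 0 := by
    intro h
    rw [h, mul_zero] at hgR'
    exact he0 (by
      rcases mul_eq_zero.1 hgR'.symm with h' | h' <;> exact h')
  set s : Fin 3 → F := x • f1 + y • f2 with hsdef
  have hsL : s ∈ L := Submodule.add_mem L (Submodule.smul_mem L _ hf1L)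
    (Submodule.smul_mem L _ hf2L)
  have hQs : Q s = R := by
    rw [hsdef, aux_expand2, hQf1, hQf2, hp12, hRdef]
    ring
  have hQsne : Q s ≠ 0 := by rw [hQs]; exact hR0
  have hs0 : s ≠ 0 := by
    intro h
    rw [h, QuadraticMap.map_zero] at hQs
    exact hR0 hQs.symm
  -- the tangent direction c
  set w : Fin 3 → F := y • f1 + (-x) • f2 with hwdef
  have hwL : w ∈ L := Submodule.add_mem L (Submodule.smul_mem L _ hf1L)
    (Submodule.smul_mem L _ hf2L)
  have hQw : Q w = R := by
    rw [hwdef, aux_expand2, hQf1, hQf2, hp12, hRdef]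
    ring
  have hpws : QuadraticMap.polar Q w s = 0 := by
    rw [hwdef, hsdef, aux_polar_combo, hQf1, hQf2, hp12]
    ring
  have hp0s : QuadraticMap.polar Q p0 s = 0 := hp0perp s hsL
  have hp0w : QuadraticMap.polar Q p0 w = 0 := hp0perp w hwL
  set c : Fin 3 → F := (e / g) • p0 + w with hcdef
  have hQc : Q c = 0 := by
    have hc1 : c = (e / g) • p0 + (1 : F) • w := by rw [hcdef, one_smul]
    rw [hc1, aux_expand2, hQp0g, hQw, hp0w]
    clear_value g R
    field_simp
    linear_combination hgR'
  have hc0 : c ≠ 0 := by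
    intro h
    apply hp0L
    have heg : e / g ≠ 0 := div_ne_zero he0 hg0
    have : (e / g) • p0 ∈ L := by
      have h' : (e / g) • p0 = -w := by
        rw [← sub_eq_zero]
        rw [hcdef] at h
        linear_combination (norm := module) h
      rw [h']
      exact Submodule.neg_mem L hwL
    exact (Submodule.smul_mem_iff L heg).1 this
  have hpcs : QuadraticMap.polar Q c s = 0 := by
    rw [hcdef, polar_add_left, polar_smul_left, hp0s, hpws]
    simp
  -- the exterior point on L
  have hExt : IsExteriorPoint (conicSet Q) (Projectivization.mk F s hs0) :=
    aux_exterior_mk Q hQ hc0 hQc hs0 hQsne hpcs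
  have hSmem : Projectivization.mk F s hs0 ∈ pointsOn L := by
    show (Projectivization.mk F s hs0).submodule ≤ L
    rw [Projectivization.submodule_mk]
    exact (Submodule.span_singleton_le_iff_mem _ L).2 hsL
  -- the line through Q0 and s
  have hindqs : LinearIndependent F ![q0, s] := by
    rw [LinearIndependent.pair_iff]
    intro a b hab
    by_cases ha : a = 0
    · refine ⟨ha, ?_⟩
      rw [ha, zero_smul, zero_add] at hab
      exact (smul_eq_zero.1 hab).resolve_right hs0
    · exfalso
      apply hq0L
      have hq0s : a • q0 = -(b • s) := by
        rw [← sub_eq_zero]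
        linear_combination (norm := module) hab
      have hq0eq' : q0 = a⁻¹ • (a • q0) := by
        rw [smul_smul, inv_mul_cancel₀ ha, one_smul]
      rw [hq0eq', hq0s]
      exact Submodule.smul_mem L _ (Submodule.neg_mem L (Submodule.smul_mem L _ hsL))
  set ℓ : Submodule F (Fin 3 → F) := Submodule.span F ({q0, s} : Set (Fin 3 → F)) with hldef
  have hlineℓ : IsProjLine F ℓ := aux_finrank_span_pair hindqs
  have hq0ℓ : q0 ∈ ℓ := Submodule.subset_span (Set.mem_insert _ _)
  have hsℓ : s ∈ ℓ := Submodule.subset_span (Set.mem_insert_of_mem _ rfl)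
  have hQ0ℓ : Q0 ∈ pointsOn ℓ := by
    show Q0.submodule ≤ ℓ
    rw [Projectivization.submodule_eq]
    exact (Submodule.span_singleton_le_iff_mem _ _).2 hq0ℓ
  have hSℓ : Projectivization.mk F s hs0 ∈ pointsOn ℓ := by
    show (Projectivization.mk F s hs0).submodule ≤ ℓ
    rw [Projectivization.submodule_mk]
    exact (Submodule.span_singleton_le_iff_mem _ _).2 hsℓ
  have hne : Projectivization.mk F s hs0 ≠ Q0 := by
    intro h
    exact hQnL (h ▸ hSmem)
  have hExtLine : IsExternalLine (conicSet Q) ℓ := by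
    apply hQ0 ℓ hlineℓ
    refine ⟨Projectivization.mk F s hs0, ⟨Or.inl ⟨hSmem, hExt⟩, hSℓ⟩, Q0,
      ⟨Or.inr rfl, hQ0ℓ⟩, hne⟩
  -- the contradiction: an isotropic vector on ℓ
  have hpq0s : QuadraticMap.polar Q q0 s = 2 * P := by
    rw [hq0eq, hsdef, polar_add_left, polar_smul_left]
    have hcombo : QuadraticMap.polar Q (u1 • f1 + u2 • f2) (x • f1 + y • f2)
        = 2 * (u1 * x + u2 * y) := by
      rw [aux_polar_combo, hQf1, hQf2, hp12]
      ring
    rw [hcombo, hp0s, hPdef]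
    simp
  set b0 : F := (-P + r) / R with hb0def
  set v0 : Fin 3 → F := q0 + b0 • s with hv0def
  have hb0R : b0 * R = -P + r := by
    rw [hb0def]
    exact div_mul_cancel₀ _ hR0
  have hQv0 : Q v0 = 0 := by
    have h1 : v0 = (1 : F) • q0 + b0 • s := by rw [hv0def, one_smul]
    have hexp : Q v0 = Q q0 + b0 * (2 * P) + b0 * b0 * R := by
      rw [h1, aux_expand2, hpq0s, hQs]
      ring
    have hQv0R : Q v0 * R = 0 := by
      have hstep : Q v0 * R = Q q0 * R + 2 * P * (b0 * R) + (b0 * R) * (b0 * R) := by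
        rw [hexp]; ring
      rw [hstep, hb0R]
      linear_combination -hf
    exact (mul_eq_zero.1 hQv0R).resolve_right hR0
  have hv00 : v0 ≠ 0 := by
    intro h
    apply hq0L
    have h' : q0 = -(b0 • s) := by
      rw [← sub_eq_zero]
      rw [hv0def] at h
      linear_combination (norm := module) h
    rw [h']
    exact Submodule.neg_mem L (Submodule.smul_mem L _ hsL)
  have hmem : Projectivization.mk F v0 hv00 ∈ conicSet Q ∩ pointsOn ℓ := by
    refine ⟨aux_mk_mem_conic Q hv00 hQv0, ?_⟩
    show (Projectivization.mk F v0 hv00).submodule ≤ ℓ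
    rw [Projectivization.submodule_mk]
    apply (Submodule.span_singleton_le_iff_mem _ _).2
    rw [hv0def]
    exact Submodule.add_mem ℓ hq0ℓ (Submodule.smul_mem ℓ _ hsℓ)
  rw [hExtLine.2] at hmem
  exact hmem
end
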